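/- arXiv:1405.4149 — 6 statements merged into one kernel-verified Lean document; each statement's English description precedes it below -/
import Mathlib

section
/- Let C > 0 and let d : ℕ × ℤ → ℝ be a function defined on the index set S = {(N, I) ∈ ℕ × ℤ : |I| ≤ N and N + I is even} satisfying: (i) for all (N, I) ∈ S with I ≥ 0, |d(N+1, I+1) − d(N, I)| ≤ C; (ii) for all (N, I) ∈ S with I ≤ 0, |d(N+1, I−1) − d(N, I)| ≤ C; (iii) for all even N, |d(N+2, 0) − d(N, 0)| ≤ C. Assume moreover that d(N, I) ≠ 0 whenever (N, I) ∈ S and N ≥ 1. Then for every real number α with 0 < α ≤ 3, the function (N, I, J) ↦ |d(N, I)|^{−α} is NOT summable over the set T = {(N, I, J) ∈ ℕ × ℤ × ℤ : N ≥ 1, |I| ≤ N, |J| ≤ N, N + I even, N + J even}. -/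
/-- (Lemma 3.1 of the paper.)  An SU(2)-equivariant self-adjoint
operator on L²(SU(2)) with bounded commutators with the generators of C(SU(2))
cannot be α-summable for α ≤ 3.  The set
T = {(N, I, J) : N ≥ 1, |I| ≤ N, |J| ≤ N, N + I even, N + J even} encodes the
orthonormal basis e^{(n)}_{ij} via N = 2n, I = 2i, J = 2j. -/
theorem stmt_1 (C : ℝ) (hC : 0 < C) (d : ℕ × ℤ → ℝ)
    (h1 : ∀ (N : ℕ) (I : ℤ), |I| ≤ (N : ℤ) → Even ((N : ℤ) + I) → 0 ≤ I →
      |d (N + 1, I + 1) - d (N, I)| ≤ C)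
    (h2 : ∀ (N : ℕ) (I : ℤ), |I| ≤ (N : ℤ) → Even ((N : ℤ) + I) → I ≤ 0 →
      |d (N + 1, I - 1) - d (N, I)| ≤ C)
    (h3 : ∀ N : ℕ, Even N → |d (N + 2, 0) - d (N, 0)| ≤ C)
    (hne : ∀ (N : ℕ) (I : ℤ), |I| ≤ (N : ℤ) → Even ((N : ℤ) + I) → 1 ≤ N →
      d (N, I) ≠ 0) :
    ∀ α : ℝ, 0 < α → α ≤ 3 →
      ¬ Summable (fun x : {p : ℕ × ℤ × ℤ // 1 ≤ p.1 ∧ |p.2.1| ≤ (p.1 : ℤ) ∧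
            |p.2.2| ≤ (p.1 : ℤ) ∧ Even ((p.1 : ℤ) + p.2.1) ∧
            Even ((p.1 : ℤ) + p.2.2)} =>
          |d (x.1.1, x.1.2.1)| ^ (-α)) := by
  intro α hα hα3 hsum
  set B : ℝ := |d (0, 0)| with hB
  set C' : ℝ := max C 1 with hC'
  have hC1 : (1 : ℝ) ≤ C' := le_max_right _ _
  have hCC : C ≤ C' := le_max_left _ _
  have hB0 : 0 ≤ B := abs_nonneg _
  -- Step 1: |d (2m, 0)| ≤ B + C' * m
  have L1 : ∀ m : ℕ, |d (2 * m, 0)| ≤ B + C' * m := by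
    intro m
    induction m with
    | zero => simp [hB]
    | succ m ih =>
      have hstep := h3 (2 * m) ⟨m, by ring⟩
      have : |d (2 * m + 2, 0)| ≤ |d (2 * m, 0)| + C := by
        have := abs_sub_abs_le_abs_sub (d (2 * m + 2, 0)) (d (2 * m, 0))
        linarith
      have h2m : 2 * (m + 1) = 2 * m + 2 := by ring
      rw [h2m]
      push_cast
      linarith
  -- Step 2: |d (2m + k, k)| ≤ B + C' * (m + k)
  have L2 : ∀ (m k : ℕ), |d (2 * m + k, (k : ℤ))| ≤ B + C' * (m + k) := by
    intro m k
    induction k with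
    | zero => simpa using L1 m
    | succ k ih =>
      have hstep := h1 (2 * m + k) (k : ℤ) (by simp) ⟨m + k, by push_cast; ring⟩
        (by positivity)
      have : |d (2 * m + k + 1, (k : ℤ) + 1)| ≤ |d (2 * m + k, (k : ℤ))| + C := by
        have := abs_sub_abs_le_abs_sub (d (2 * m + k + 1, (k : ℤ) + 1)) (d (2 * m + k, (k : ℤ)))
        linarith
      have e1 : 2 * m + (k + 1) = 2 * m + k + 1 := by ring
      have e2 : ((k + 1 : ℕ) : ℤ) = (k : ℤ) + 1 := by push_cast; ring
      rw [e1, e2]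
      push_cast
      push_cast at ih
      linarith
  -- Step 3: |d (2m + k, -k)| ≤ B + C' * (m + k)
  have L3 : ∀ (m k : ℕ), |d (2 * m + k, -(k : ℤ))| ≤ B + C' * (m + k) := by
    intro m k
    induction k with
    | zero => simpa using L1 m
    | succ k ih =>
      have hstep := h2 (2 * m + k) (-(k : ℤ)) (by simp) ⟨m, by push_cast; ring⟩
        (by simp)
      have : |d (2 * m + k + 1, -(k : ℤ) - 1)| ≤ |d (2 * m + k, -(k : ℤ))| + C := by
        have := abs_sub_abs_le_abs_sub (d (2 * m + k + 1, -(k : ℤ) - 1)) (d (2 * m + k, -(k : ℤ)))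
        linarith
      have e1 : 2 * m + (k + 1) = 2 * m + k + 1 := by ring
      have e2 : (-((k + 1 : ℕ) : ℤ)) = -(k : ℤ) - 1 := by push_cast; ring
      rw [e1, e2]
      push_cast
      push_cast at ih
      linarith
  -- Main bound
  have hbd : ∀ (N : ℕ) (I : ℤ), |I| ≤ (N : ℤ) → Even ((N : ℤ) + I) →
      |d (N, I)| ≤ B + C' * N := by
    intro N I hI hE
    rcases le_or_gt 0 I with hI0 | hI0
    · set k : ℕ := I.toNat with hk
      have hkI : (k : ℤ) = I := Int.toNat_of_nonneg hI0
      have hIN : I ≤ (N : ℤ) := le_trans (le_abs_self I) hI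
      have hkN : k ≤ N := by omega
      obtain ⟨t, ht⟩ : Even (N + k) := by
        have : Even ((N : ℤ) + (k : ℤ)) := by rw [hkI]; exact hE
        rw [← Nat.cast_add] at this
        exact_mod_cast this
      have hkt : k ≤ t := by omega
      have hNm : N = 2 * (t - k) + k := by omega
      have := L2 (t - k) k
      rw [hkI] at this
      rw [hNm]
      refine this.trans ?_
      have hle : ((t - k : ℕ) : ℝ) + (k : ℝ) ≤ ((2 * (t - k) + k : ℕ) : ℝ) := by
        push_cast; linarith [Nat.cast_nonneg (α := ℝ) (t - k)]
      have : C' * (((t - k : ℕ) : ℝ) + k) ≤ C' * ((2 * (t - k) + k : ℕ) : ℝ) :=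
        mul_le_mul_of_nonneg_left hle (by linarith)
      push_cast at this ⊢
      linarith
    · set k : ℕ := (-I).toNat with hk
      have hkI : (k : ℤ) = -I := Int.toNat_of_nonneg (by omega)
      have hIN : -I ≤ (N : ℤ) := le_trans (neg_le_abs I) hI
      have hkN : k ≤ N := by omega
      obtain ⟨t, ht⟩ : Even (N + k) := by
        have h' : Even ((N : ℤ) + (k : ℤ)) := by
          obtain ⟨s, hs⟩ := hE
          exact ⟨s - I, by omega⟩
        rw [← Nat.cast_add] at h'
        exact_mod_cast h'
      have hkt : k ≤ t := by omega
      have hNm : N = 2 * (t - k) + k := by omega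
      have := L3 (t - k) k
      have hIk : I = -(k : ℤ) := by omega
      rw [← hIk] at this
      rw [hNm]
      refine this.trans ?_
      have hle : ((t - k : ℕ) : ℝ) + (k : ℝ) ≤ ((2 * (t - k) + k : ℕ) : ℝ) := by
        push_cast; linarith [Nat.cast_nonneg (α := ℝ) (t - k)]
      have : C' * (((t - k : ℕ) : ℝ) + k) ≤ C' * ((2 * (t - k) + k : ℕ) : ℝ) :=
        mul_le_mul_of_nonneg_left hle (by linarith)
      push_cast at this ⊢
      linarith
  -- injection from a sigma type into T
  classical
  let e : (Σ n : ℕ, Fin (n + 1) × Fin (n + 1)) →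
      {p : ℕ × ℤ × ℤ // 1 ≤ p.1 ∧ |p.2.1| ≤ (p.1 : ℤ) ∧
        |p.2.2| ≤ (p.1 : ℤ) ∧ Even ((p.1 : ℤ) + p.2.1) ∧
        Even ((p.1 : ℤ) + p.2.2)} := fun x =>
    ⟨(2 * (x.1 + 1), 2 * ((x.2.1 : ℕ) : ℤ), 2 * ((x.2.2 : ℕ) : ℤ)), by
      have hi := x.2.1.isLt
      have hj := x.2.2.isLt
      refine ⟨by omega, ?_, ?_, ⟨(x.1 : ℤ) + 1 + (x.2.1 : ℕ), by push_cast; ring⟩,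
        ⟨(x.1 : ℤ) + 1 + (x.2.2 : ℕ), by push_cast; ring⟩⟩
      · rw [abs_of_nonneg (by positivity)]; push_cast; omega
      · rw [abs_of_nonneg (by positivity)]; push_cast; omega⟩
  have einj : Function.Injective e := by
    rintro ⟨n, i, j⟩ ⟨m, a, b⟩ h
    simp only [e, Subtype.mk.injEq, Prod.mk.injEq, Nat.cast_inj] at h
    obtain ⟨hnm', hia, hjb⟩ := h
    have hnm : n = m := by omega
    subst hnm
    obtain rfl : i = a := by
      ext
      omega
    obtain rfl : j = b := by
      ext
      omega
    rfl
  have hsum2 := hsum.comp_injective einj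
  set K : ℝ := (B + C') ^ (-(3 : ℝ)) with hKdef
  have hBC : (0 : ℝ) < B + C' := by linarith
  have hKpos : 0 < K := Real.rpow_pos_of_pos hBC _
  -- pointwise lower bound on the sigma type
  have hlb : ∀ x : Σ n : ℕ, Fin (n + 1) × Fin (n + 1),
      K * (((2 * (x.1 + 1) : ℕ) : ℝ)) ^ (-(3 : ℝ)) ≤
        ((fun x : {p : ℕ × ℤ × ℤ // 1 ≤ p.1 ∧ |p.2.1| ≤ (p.1 : ℤ) ∧
            |p.2.2| ≤ (p.1 : ℤ) ∧ Even ((p.1 : ℤ) + p.2.1) ∧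
            Even ((p.1 : ℤ) + p.2.2)} => |d (x.1.1, x.1.2.1)| ^ (-α)) ∘ e) x := by
    rintro ⟨n, i, j⟩
    have hi := i.isLt
    set N : ℕ := 2 * (n + 1) with hNdef
    have hIabs : |(2 * ((i : ℕ) : ℤ))| ≤ (N : ℤ) := by
      rw [abs_of_nonneg (by positivity)]; omega
    have hIev : Even ((N : ℤ) + 2 * ((i : ℕ) : ℤ)) :=
      ⟨(n : ℤ) + 1 + (i : ℕ), by rw [hNdef]; push_cast; ring⟩
    have hN1 : 1 ≤ N := by omega
    have hdne : d (N, 2 * ((i : ℕ) : ℤ)) ≠ 0 := hne N _ hIabs hIev hN1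
    have habs : 0 < |d (N, 2 * ((i : ℕ) : ℤ))| := abs_pos.mpr hdne
    have hub : |d (N, 2 * ((i : ℕ) : ℤ))| ≤ B + C' * N := hbd N _ hIabs hIev
    have hNR : (1 : ℝ) ≤ (N : ℝ) := by exact_mod_cast hN1
    have step1 : (B + C' * N) ^ (-α) ≤ |d (N, 2 * ((i : ℕ) : ℤ))| ^ (-α) :=
      Real.rpow_le_rpow_of_nonpos habs hub (by linarith)
    have hbase1 : (1 : ℝ) ≤ B + C' * N := by nlinarith
    have step2 : (B + C' * N) ^ (-(3 : ℝ)) ≤ (B + C' * N) ^ (-α) :=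
      Real.rpow_le_rpow_of_exponent_le hbase1 (by linarith)
    have hbb : B + C' * N ≤ (B + C') * N := by nlinarith
    have step3 : ((B + C') * N) ^ (-(3 : ℝ)) ≤ (B + C' * N) ^ (-(3 : ℝ)) :=
      Real.rpow_le_rpow_of_nonpos (by nlinarith) hbb (by norm_num)
    have step4 : ((B + C') * (N : ℝ)) ^ (-(3 : ℝ)) = K * ((N : ℝ)) ^ (-(3 : ℝ)) := by
      rw [hKdef, ← Real.mul_rpow (le_of_lt hBC) (Nat.cast_nonneg N)]
    show K * ((N : ℕ) : ℝ) ^ (-(3 : ℝ)) ≤ |d (N, 2 * ((i : ℕ) : ℤ))| ^ (-α)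
    rw [← step4]
    exact le_trans step3 (le_trans step2 step1)
  have hsumL : Summable (fun x : Σ n : ℕ, Fin (n + 1) × Fin (n + 1) =>
      K * (((2 * (x.1 + 1) : ℕ) : ℝ)) ^ (-(3 : ℝ))) :=
    Summable.of_nonneg_of_le (fun x => by positivity) hlb hsum2
  have hsumG : Summable (fun x : Σ n : ℕ, Fin (n + 1) × Fin (n + 1) =>
      (((2 * (x.1 + 1) : ℕ) : ℝ)) ^ (-(3 : ℝ))) :=
    (summable_mul_left_iff hKpos.ne').mp hsumL
  have hsumF := ((summable_sigma_of_nonneg (fun x => by positivity)).mp hsumG).2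
  -- compute the fiber sums
  have key : ∀ n : ℕ, ∑' (_ : Fin (n + 1) × Fin (n + 1)),
      (((2 * (n + 1) : ℕ) : ℝ)) ^ (-(3 : ℝ)) = (8 : ℝ)⁻¹ * ((n : ℝ) + 1)⁻¹ := by
    intro n
    have hx : (0 : ℝ) ≤ ((2 * (n + 1) : ℕ) : ℝ) := Nat.cast_nonneg _
    have hrp : (((2 * (n + 1) : ℕ) : ℝ)) ^ (-(3 : ℝ)) =
        ((((2 * (n + 1) : ℕ) : ℝ)) ^ (3 : ℕ))⁻¹ := by
      rw [show (-(3 : ℝ)) = -((3 : ℕ) : ℝ) by norm_num, Real.rpow_neg hx,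
        Real.rpow_natCast]
    rw [tsum_fintype]
    simp only [Finset.sum_const, Finset.card_univ, Fintype.card_prod, Fintype.card_fin,
      nsmul_eq_mul, hrp]
    have hn1 : ((n : ℝ) + 1) ≠ 0 := by positivity
    push_cast
    field_simp
    ring
  rw [funext key] at hsumF
  have hsumH : Summable (fun n : ℕ => ((n : ℝ) + 1)⁻¹) :=
    (summable_mul_left_iff (by norm_num : ((8 : ℝ)⁻¹) ≠ 0)).mp hsumF
  have hsumH' : Summable (fun n : ℕ => (((n + 1 : ℕ) : ℝ))⁻¹) := by
    simpa [Nat.cast_add] using hsumH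
  exact Real.not_summable_natCast_inv ((summable_nat_add_iff 1).mp hsumH')
end

section
/- Let n ≥ 1 be an integer, C > 0, and let d : ℤⁿ → ℝ satisfy |d(k + e_j) − d(k)| ≤ C for all k ∈ ℤⁿ and all 1 ≤ j ≤ n (e_j the j-th standard basis vector), and suppose d(k) ≠ 0 for all k ≠ 0. Then for every real number α with 0 < α ≤ n, the function k ↦ |d(k)|^{−α} is NOT summable over ℤⁿ \ {0}. -/
lemma lip (n : ℕ) (C : ℝ) (d : (Fin n → ℤ) → ℝ)
    (h : ∀ (k : Fin n → ℤ) (j : Fin n), |d (k + Pi.single j 1) - d k| ≤ C) :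
    ∀ (N : ℕ) (k : Fin n → ℤ), (∑ i, (k i).natAbs) = N → |d k - d 0| ≤ C * N := by
  intro N
  induction N with
  | zero =>
    intro k hk
    have hz : k = 0 := by
      funext i
      have := (Finset.sum_eq_zero_iff.mp hk) i (Finset.mem_univ i)
      simpa [Int.natAbs_eq_zero] using this
    simp [hz]
  | succ N ih =>
    intro k hk
    have hj : ∃ j, k j ≠ 0 := by
      by_contra hcon
      push_neg at hcon
      simp [hcon] at hk
    obtain ⟨j, hj⟩ := hj
    have hC0 : 0 ≤ C := le_trans (abs_nonneg _) (h 0 j)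
    have split : ∀ (m : Fin n → ℤ), ∑ i, (m i).natAbs
        = ∑ i ∈ Finset.univ.erase j, (m i).natAbs + (m j).natAbs :=
      fun m => (Finset.sum_erase_add _ _ (Finset.mem_univ j)).symm
    rcases hj.lt_or_gt with hneg | hpos
    · -- k j < 0 : k' = k + e_j
      set k' : Fin n → ℤ := k + Pi.single j 1 with hk'
      have hag : ∑ i ∈ Finset.univ.erase j, (k' i).natAbs
          = ∑ i ∈ Finset.univ.erase j, (k i).natAbs := by
        refine Finset.sum_congr rfl fun i hi => ?_
        have : i ≠ j := (Finset.mem_erase.mp hi).1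
        simp [hk', Pi.single_apply, this]
      have hkj : (k' j) = k j + 1 := by simp [hk']
      have hsum : ∑ i, (k' i).natAbs = N := by
        have h1 := split k'
        have h2 := split k
        rw [hk] at h2
        rw [h1, hag, hkj]
        omega
      have hstep : |d k - d k'| ≤ C := by
        rw [abs_sub_comm]
        simpa [hk'] using h k j
      calc |d k - d 0| ≤ |d k - d k'| + |d k' - d 0| := abs_sub_le _ _ _
        _ ≤ C + C * N := add_le_add hstep (ih k' hsum)
        _ = C * (N + 1 : ℕ) := by push_cast; ring
    · -- k j > 0 : k' = k - e_j
      set k' : Fin n → ℤ := k - Pi.single j 1 with hk'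
      have hag : ∑ i ∈ Finset.univ.erase j, (k' i).natAbs
          = ∑ i ∈ Finset.univ.erase j, (k i).natAbs := by
        refine Finset.sum_congr rfl fun i hi => ?_
        have : i ≠ j := (Finset.mem_erase.mp hi).1
        simp [hk', Pi.single_apply, this]
      have hkj : (k' j) = k j - 1 := by simp [hk']
      have hsum : ∑ i, (k' i).natAbs = N := by
        have h1 := split k'
        have h2 := split k
        rw [hk] at h2
        rw [h1, hag, hkj]
        omega
      have hke : k = k' + Pi.single j 1 := by simp [hk']
      have hstep : |d k - d k'| ≤ C := by
        rw [hke]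
        exact h k' j
      calc |d k - d 0| ≤ |d k - d k'| + |d k' - d 0| := abs_sub_le _ _ _
        _ ≤ C + C * N := add_le_add hstep (ih k' hsum)
        _ = C * (N + 1 : ℕ) := by push_cast; ring


/-- No 𝕋ⁿ-equivariant Dirac operator on the noncommutative n-torus
with bounded commutators is α-summable for α ≤ n: under the bounded-commutator
condition, |d|^{−α} is not summable over ℤⁿ \ {0} whenever 0 < α ≤ n. -/
theorem stmt_4 (n : ℕ) (hn : 1 ≤ n) (C : ℝ) (hC : 0 < C) (d : (Fin n → ℤ) → ℝ)
    (h : ∀ (k : Fin n → ℤ) (j : Fin n), |d (k + Pi.single j 1) - d k| ≤ C)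
    (hne : ∀ k : Fin n → ℤ, k ≠ 0 → d k ≠ 0) :
    ∀ α : ℝ, 0 < α → α ≤ (n : ℝ) →
      ¬ Summable (fun k : {k : Fin n → ℤ // k ≠ 0} => |d k.1| ^ (-α)) := by
  intro α hα hαn hs
  set f : (Fin n → ℤ) → ℝ := fun k => |d k| ^ (-α) with hf
  have hF : Summable ({k : Fin n → ℤ | k ≠ 0}.indicator f) := by
    rw [← summable_subtype_iff_indicator]
    exact hs
  set B : ℝ := |d 0| + C * n + 1 with hB
  have hB1 : (1:ℝ) ≤ B := by
    have h1 : 0 ≤ |d 0| := abs_nonneg _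
    have h2 : 0 ≤ C * n := by positivity
    simp only [hB]; linarith
  set ε : ℝ := ((2*B)^n)⁻¹ with hε
  have hε0 : 0 < ε := by
    have : (0:ℝ) < 2*B := by linarith
    positivity
  obtain ⟨s, hsv⟩ := (summable_iff_vanishing.mp hF) (Set.Iio ε) (Iio_mem_nhds hε0)
  set i0 : Fin n := ⟨0, hn⟩
  set M : ℕ := s.sup (fun k => (k i0).toNat) with hM
  set T : ℕ := M + 1 with hT
  have hTM : (M:ℤ) < 2^T := by
    have := Nat.lt_two_pow_self (n := M)
    have h2 : (2:ℕ)^M ≤ 2^T := by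
      rw [hT]
      exact Nat.pow_le_pow_right (by norm_num) (Nat.le_succ M)
    exact_mod_cast lt_of_lt_of_le this h2
  set Q : Finset (Fin n → ℤ) :=
    Fintype.piFinset (fun _ : Fin n => Finset.Ico ((2:ℤ)^T) (2^(T+1))) with hQ
  have hco : ∀ k ∈ Q, ∀ i, (2:ℤ)^T ≤ k i ∧ k i < 2^(T+1) := by
    intro k hk i
    have := Fintype.mem_piFinset.mp hk i
    simpa [Finset.mem_Ico] using this
  have hdisj : Disjoint Q s := by
    rw [Finset.disjoint_left]
    intro k hkQ hks
    have h1 : (2:ℤ)^T ≤ k i0 := (hco k hkQ i0).1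
    have h2 : (k i0).toNat ≤ M := Finset.le_sup (f := fun k => (k i0).toNat) hks
    have h3 : k i0 ≤ ((k i0).toNat : ℤ) := Int.self_le_toNat _
    have h4 : ((k i0).toNat : ℤ) ≤ (M:ℤ) := by exact_mod_cast h2
    linarith
  -- pointwise lower bound on Q
  have h2T : (1:ℝ) ≤ 2^(T+1) := one_le_pow₀ (by norm_num)
  have hBT1 : (1:ℝ) ≤ B * 2^(T+1) := by nlinarith
  have hlow : ∀ k ∈ Q, ((B * 2^(T+1))^n)⁻¹ ≤ ({k : Fin n → ℤ | k ≠ 0}.indicator f) k := by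
    intro k hk
    have hpos : (0:ℤ) < 2^T := by positivity
    have hk0 : k ≠ 0 := by
      intro hz
      have := (hco k hk i0).1
      rw [hz] at this
      simp only [Pi.zero_apply] at this
      exact absurd this (not_le.mpr hpos)
    rw [Set.indicator_of_mem (by exact hk0 : k ∈ {k : Fin n → ℤ | k ≠ 0})]
    -- bound on |d k|
    have hsumN : (∑ i, ((k i).natAbs : ℝ)) ≤ n * 2^(T+1) := by
      have hub : ∀ i ∈ Finset.univ, ((k i).natAbs : ℝ) ≤ 2^(T+1) := by
        intro i _
        have h1 := (hco k hk i).1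
        have h2 := (hco k hk i).2
        have h4 : ((k i).natAbs : ℤ) ≤ 2^(T+1) := by
          rw [Int.natAbs_of_nonneg (by linarith : (0:ℤ) ≤ k i)]
          exact h2.le
        exact_mod_cast h4
      calc (∑ i, ((k i).natAbs : ℝ)) ≤ ∑ _i : Fin n, (2:ℝ)^(T+1) :=
            Finset.sum_le_sum hub
        _ = n * 2^(T+1) := by simp [Finset.sum_const, nsmul_eq_mul]
    have hlipk := lip n C d h (∑ i, (k i).natAbs) k rfl
    have hdk : |d k| ≤ B * 2^(T+1) := by
      have h1 : |d k| ≤ |d k - d 0| + |d 0| := by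
        calc |d k| = |(d k - d 0) + d 0| := by congr 1; ring
          _ ≤ |d k - d 0| + |d 0| := abs_add_le _ _
      have h2 : C * ((∑ i, (k i).natAbs : ℕ) : ℝ) ≤ C * (n * 2^(T+1)) := by
        apply mul_le_mul_of_nonneg_left _ hC.le
        push_cast
        exact hsumN
      have h3 : |d 0| ≤ |d 0| * 2^(T+1) := le_mul_of_one_le_right (abs_nonneg _) h2T
      have hBexp : B * 2^(T+1) = |d 0| * 2^(T+1) + C * n * 2^(T+1) + 2^(T+1) := by
        simp only [hB]; ring
      nlinarith [hlipk]
    have hdk0 : 0 < |d k| := abs_pos.mpr (hne k hk0)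
    have h1 : (B * 2^(T+1))^(-α) ≤ |d k| ^ (-α) :=
      Real.rpow_le_rpow_of_nonpos hdk0 hdk (neg_nonpos.mpr hα.le)
    have h2 : (B*2^(T+1))^(-(n:ℝ)) ≤ (B*2^(T+1))^(-α) :=
      Real.rpow_le_rpow_of_exponent_le hBT1 (neg_le_neg hαn)
    have h3 : (B*2^(T+1))^(-(n:ℝ)) = ((B*2^(T+1))^n)⁻¹ := by
      rw [Real.rpow_neg (by linarith), Real.rpow_natCast]
    simp only [hf]
    rw [← h3]
    exact le_trans h2 h1
  -- card of Q
  have hcard : Q.card = (2^T)^n := by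
    have h1 : ((2:ℤ)^(T+1) - 2^T) = ((2^T : ℕ) : ℤ) := by push_cast; ring
    simp only [hQ, Fintype.card_piFinset, Int.card_Ico, h1, Int.toNat_natCast,
      Finset.prod_const, Finset.card_univ, Fintype.card_fin]
  -- sum lower bound
  have hsumQ : (Q.card : ℝ) * ((B*2^(T+1))^n)⁻¹ ≤ ∑ k ∈ Q, ({k : Fin n → ℤ | k ≠ 0}.indicator f) k := by
    simpa [nsmul_eq_mul] using Finset.card_nsmul_le_sum Q _ _ hlow
  have hεle : ε ≤ (Q.card : ℝ) * ((B*2^(T+1))^n)⁻¹ := by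
    rw [hcard]
    have hBne : (2*B) ≠ 0 := by positivity
    have key : (((2^T : ℕ)^n : ℕ) : ℝ) * ((B*2^(T+1))^n)⁻¹ = ((2*B)^n)⁻¹ := by
      have hpow : (B * 2^(T+1) : ℝ)^n = ((2:ℝ)^T)^n * (2*B)^n := by
        rw [← mul_pow]
        congr 1
        rw [pow_succ]
        ring
      rw [hpow]
      push_cast
      have h2Tne : ((2:ℝ)^T)^n ≠ 0 := by positivity
      field_simp
    rw [key]
  have hlt := hsv Q hdisj
  simp only [Set.mem_Iio] at hlt
  linarith
end

section
/- Let ℓ ≥ 1. For n ∈ ℕ define δ_n := Σ_λ W(λ)², where the sum runs over all weakly decreasing functions λ : {0, 1, …, ℓ} → ℕ with λ(0) = n and λ(ℓ) = 0, and W(λ) := ∏_{0 ≤ i < j ≤ ℓ} (λ(i) − λ(j) + j − i)/(j − i). Then there exist constants c₁, c₂ > 0 such that for all n ≥ 1, c₁·n^{ℓ(ℓ+2)−1} ≤ δ_n ≤ c₂·n^{ℓ(ℓ+2)−1}. -/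
/-- The Weyl dimension formula for the irreducible unitary representation of
SU_q(ℓ+1) with highest weight (Young tableau) f : {0, …, ℓ} → ℕ. -/
noncomputable def weylDim (ℓ : ℕ) (f : Fin (ℓ + 1) → ℕ) : ℝ :=
  ∏ p ∈ Finset.univ.filter (fun p : Fin (ℓ + 1) × Fin (ℓ + 1) => p.1 < p.2),
    (((f p.1 : ℝ) - (f p.2 : ℝ) + ((p.2 : ℕ) : ℝ) - ((p.1 : ℕ) : ℝ)) /
      (((p.2 : ℕ) : ℝ) - ((p.1 : ℕ) : ℝ)))

/-- δ_n = Σ_λ W(λ)², summed over Young tableaux λ with λ(0) = n, λ(ℓ) = 0: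
the dimension of the eigenspace of eigenvalue n of the equivariant operator
D̃ : e^λ_{r,s} ↦ λ(0) e^λ_{r,s} on L²(SU_q(ℓ+1)). -/
noncomputable def deltaDim (ℓ n : ℕ) : ℝ :=
  ∑ᶠ f ∈ {f : Fin (ℓ + 1) → ℕ | Antitone f ∧ f 0 = n ∧ f (Fin.last ℓ) = 0},
    (weylDim ℓ f) ^ 2

open Finset

-- pairs
def myPairs (ℓ : ℕ) : Finset (Fin (ℓ+1) × Fin (ℓ+1)) :=
  Finset.univ.filter (fun p => p.1 < p.2)

lemma two_card_myPairs (ℓ : ℕ) : 2 * (myPairs ℓ).card = ℓ * (ℓ + 1) := by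
  classical
  have hAB : (myPairs ℓ).card =
      (Finset.univ.filter (fun p : Fin (ℓ+1) × Fin (ℓ+1) => p.2 < p.1)).card := by
    refine Finset.card_nbij' Prod.swap Prod.swap ?_ ?_ (fun p _ => Prod.swap_swap p) (fun p _ => Prod.swap_swap p)
    · intro p hp; simp [myPairs] at hp ⊢; exact hp
    · intro p hp; simp [myPairs] at hp ⊢; exact hp
  have hC : (Finset.univ.filter (fun p : Fin (ℓ+1) × Fin (ℓ+1) => p.1 = p.2)).card = ℓ + 1 := by
    have : (Finset.univ.filter (fun p : Fin (ℓ+1) × Fin (ℓ+1) => p.1 = p.2)).card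
        = (Finset.univ : Finset (Fin (ℓ+1))).card := by
      refine Finset.card_nbij' Prod.fst (fun j => (j, j)) ?_ ?_ ?_ ?_
      · intro p _; simp
      · intro j _; simp
      · intro p hp; simp at hp; ext <;> simp [hp]
      · intro j _; simp
    simp at this; omega
  have hsplit : (myPairs ℓ).card
      + (Finset.univ.filter (fun p : Fin (ℓ+1) × Fin (ℓ+1) => p.2 < p.1)).card
      + (Finset.univ.filter (fun p : Fin (ℓ+1) × Fin (ℓ+1) => p.1 = p.2)).card
      = (ℓ+1) * (ℓ+1) := by
    have h1 := Finset.card_filter_add_card_filter_not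
      (s := (Finset.univ : Finset (Fin (ℓ+1) × Fin (ℓ+1)))) (p := fun p => p.1 < p.2)
    have h2 := Finset.card_filter_add_card_filter_not
      (s := (Finset.univ.filter (fun p : Fin (ℓ+1) × Fin (ℓ+1) => ¬ p.1 < p.2)))
      (p := fun p => p.2 < p.1)
    rw [Finset.filter_filter, Finset.filter_filter] at h2
    have e1 : (Finset.univ.filter (fun p : Fin (ℓ+1) × Fin (ℓ+1) => ¬ p.1 < p.2 ∧ p.2 < p.1))
        = Finset.univ.filter (fun p : Fin (ℓ+1) × Fin (ℓ+1) => p.2 < p.1) := by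
      apply Finset.filter_congr; intro p _
      constructor
      · rintro ⟨_, h⟩; exact h
      · intro h; exact ⟨fun h' => absurd h (lt_asymm h'), h⟩
    have e2 : (Finset.univ.filter (fun p : Fin (ℓ+1) × Fin (ℓ+1) => ¬ p.1 < p.2 ∧ ¬ p.2 < p.1))
        = Finset.univ.filter (fun p : Fin (ℓ+1) × Fin (ℓ+1) => p.1 = p.2) := by
      apply Finset.filter_congr; intro p _
      constructor
      · rintro ⟨h1, h2⟩; exact le_antisymm (not_lt.1 h2) (not_lt.1 h1)
      · intro h; simp [h]
    rw [e1, e2] at h2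
    have hcard : (Finset.univ : Finset (Fin (ℓ+1) × Fin (ℓ+1))).card = (ℓ+1) * (ℓ+1) := by
      simp
    have hA : #(myPairs ℓ) = #(Finset.univ.filter (fun p : Fin (ℓ+1) × Fin (ℓ+1) => p.1 < p.2)) := rfl
    linarith [h1, h2, hcard, hA]
  have hring : (ℓ+1) * (ℓ+1) = ℓ * (ℓ+1) + (ℓ+1) := by ring
  rw [hring] at hsplit
  rw [hAB] at hsplit ⊢
  linarith [hsplit]

lemma young_finite (ℓ n : ℕ) :
    {f : Fin (ℓ + 1) → ℕ | Antitone f ∧ f 0 = n ∧ f (Fin.last ℓ) = 0}.Finite := by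
  apply Set.Finite.subset (Set.finite_Iic (fun _ => n : Fin (ℓ+1) → ℕ))
  rintro f ⟨hf, h0, -⟩
  intro i
  exact h0 ▸ hf (Fin.zero_le i)

lemma deltaDim_eq (ℓ n : ℕ) :
    deltaDim ℓ n = ∑ f ∈ (young_finite ℓ n).toFinset, weylDim ℓ f ^ 2 :=
  finsum_mem_eq_finite_toFinset_sum _ (young_finite ℓ n)

lemma exp_eq (ℓ : ℕ) (hℓ : 1 ≤ ℓ) : ℓ*(ℓ+1) + (ℓ-1) = ℓ*(ℓ+2) - 1 := by
  have h1 : 1 ≤ ℓ*(ℓ+2) := Nat.one_le_iff_ne_zero.2 (by positivity)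
  zify [hℓ, h1]
  ring

lemma one_le_weylDim {ℓ : ℕ} {f : Fin (ℓ+1) → ℕ} (hf : Antitone f) :
    1 ≤ weylDim ℓ f := by
  unfold weylDim
  rw [← Finset.prod_const_one]
  apply Finset.prod_le_prod (fun i _ => zero_le_one)
  intro p hp
  simp only [Finset.mem_filter] at hp
  have hlt : (p.1 : ℕ) < (p.2 : ℕ) := hp.2
  have hle : f p.2 ≤ f p.1 := hf hp.2.le
  have hd : (0:ℝ) < ((p.2 : ℕ) : ℝ) - ((p.1 : ℕ) : ℝ) := by
    have : ((p.1 : ℕ) : ℝ) < ((p.2 : ℕ) : ℝ) := by exact_mod_cast hlt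
    linarith
  rw [le_div_iff₀ hd]
  have : ((f p.2 : ℕ) : ℝ) ≤ ((f p.1 : ℕ) : ℝ) := by exact_mod_cast hle
  linarith

lemma weylDim_nonneg {ℓ : ℕ} {f : Fin (ℓ+1) → ℕ} (hf : Antitone f) :
    0 ≤ weylDim ℓ f := le_trans zero_le_one (one_le_weylDim hf)

lemma weylDim_le {ℓ n : ℕ} {f : Fin (ℓ+1) → ℕ} (hf : Antitone f) (h0 : f 0 = n) :
    weylDim ℓ f ≤ ((n : ℝ) + ℓ) ^ (myPairs ℓ).card := by
  unfold weylDim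
  rw [← Finset.prod_const]
  apply Finset.prod_le_prod
  · intro p hp
    simp only [Finset.mem_filter] at hp
    have hlt : (p.1 : ℕ) < (p.2 : ℕ) := hp.2
    have hle : f p.2 ≤ f p.1 := hf hp.2.le
    have hd : (0:ℝ) < ((p.2 : ℕ) : ℝ) - ((p.1 : ℕ) : ℝ) := by
      have : ((p.1 : ℕ) : ℝ) < ((p.2 : ℕ) : ℝ) := by exact_mod_cast hlt
      linarith
    apply div_nonneg _ hd.le
    have : ((f p.2 : ℕ) : ℝ) ≤ ((f p.1 : ℕ) : ℝ) := by exact_mod_cast hle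
    linarith
  · intro p hp
    simp only [Finset.mem_filter] at hp
    have hlt : (p.1 : ℕ) < (p.2 : ℕ) := hp.2
    have hle : f p.2 ≤ f p.1 := hf hp.2.le
    have hfn : f p.1 ≤ n := h0 ▸ hf (Fin.zero_le p.1)
    have hjl : (p.2 : ℕ) ≤ ℓ := p.2.is_le
    have hd : (1:ℝ) ≤ ((p.2 : ℕ) : ℝ) - ((p.1 : ℕ) : ℝ) := by
      have : (p.1 : ℕ) + 1 ≤ (p.2 : ℕ) := hlt
      have := (Nat.cast_le (α := ℝ)).2 this
      push_cast at this
      linarith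
    have hnum0 : (0:ℝ) ≤ ((f p.1 : ℕ) : ℝ) - ((f p.2 : ℕ) : ℝ) + ((p.2 : ℕ) : ℝ) - ((p.1 : ℕ) : ℝ) := by
      have : ((f p.2 : ℕ) : ℝ) ≤ ((f p.1 : ℕ) : ℝ) := by exact_mod_cast hle
      linarith
    calc _ ≤ ((f p.1 : ℕ) : ℝ) - ((f p.2 : ℕ) : ℝ) + ((p.2 : ℕ) : ℝ) - ((p.1 : ℕ) : ℝ) :=
          div_le_self hnum0 hd
      _ ≤ (n : ℝ) + ℓ := by
          have h1 : ((f p.1 : ℕ) : ℝ) ≤ (n:ℝ) := by exact_mod_cast hfn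
          have h2 : (0:ℝ) ≤ ((f p.2 : ℕ) : ℝ) := by positivity
          have h3 : ((p.2 : ℕ) : ℝ) ≤ (ℓ:ℝ) := by exact_mod_cast hjl
          have h4 : (0:ℝ) ≤ ((p.1 : ℕ) : ℝ) := by positivity
          linarith

lemma young_card_le (ℓ n : ℕ) (hℓ : 1 ≤ ℓ) :
    (young_finite ℓ n).toFinset.card ≤ (n+1) ^ (ℓ - 1) := by
  classical
  have h := Finset.card_le_card_of_injOn
    (s := (young_finite ℓ n).toFinset)
    (t := (Finset.univ : Finset (Fin (ℓ-1) → Fin (n+1))))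
    (fun (f : Fin (ℓ+1) → ℕ) (i : Fin (ℓ-1)) =>
      (⟨min (f ⟨i.val+1, by omega⟩) n, Nat.lt_succ_of_le (min_le_right _ _)⟩ : Fin (n+1)))
    (fun a _ => Finset.mem_univ _) ?_
  · calc (young_finite ℓ n).toFinset.card ≤ _ := h
      _ = (n+1) ^ (ℓ-1) := by
        rw [Finset.card_univ, Fintype.card_fun]
        simp
  · intro f hf g hg hfg
    simp only [Finset.mem_coe, Set.Finite.mem_toFinset, Set.mem_setOf_eq] at hf hg
    obtain ⟨haf, h0f, hlf⟩ := hf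
    obtain ⟨hag, h0g, hlg⟩ := hg
    funext j
    by_cases hj0 : j.val = 0
    · have : j = 0 := by ext; simp [hj0]
      rw [this, h0f, h0g]
    · by_cases hjl : j.val = ℓ
      · have : j = Fin.last ℓ := by ext; simp [hjl]
        rw [this, hlf, hlg]
      · have hjr : j.val - 1 < ℓ - 1 := by omega
        have := congrFun hfg ⟨j.val - 1, hjr⟩
        simp only [Fin.mk.injEq] at this
        have hidx : (⟨j.val - 1 + 1, by omega⟩ : Fin (ℓ+1)) = j := by ext; simp; omega
        rw [hidx] at this
        have hfn : f j ≤ n := h0f ▸ haf (Fin.zero_le j)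
        have hgn : g j ≤ n := h0g ▸ hag (Fin.zero_le j)
        omega

lemma deltaDim_le_bound (ℓ n : ℕ) (hℓ : 1 ≤ ℓ) (hn : 1 ≤ n) :
    deltaDim ℓ n ≤ ((ℓ:ℝ)+1) ^ (ℓ*(ℓ+2)-1) * (n:ℝ) ^ (ℓ*(ℓ+2)-1) := by
  rw [deltaDim_eq]
  have hn' : (1:ℝ) ≤ n := by exact_mod_cast hn
  have hl' : (1:ℝ) ≤ ℓ := by exact_mod_cast hℓ
  have hbound : ∀ f ∈ (young_finite ℓ n).toFinset,
      weylDim ℓ f ^ 2 ≤ ((n:ℝ) + ℓ) ^ (ℓ*(ℓ+1)) := by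
    intro f hf
    simp only [Set.Finite.mem_toFinset, Set.mem_setOf_eq] at hf
    obtain ⟨ha, h0, -⟩ := hf
    have h1 := weylDim_le ha h0
    have h2 := weylDim_nonneg ha
    calc weylDim ℓ f ^ 2 ≤ (((n:ℝ) + ℓ) ^ (myPairs ℓ).card) ^ 2 :=
          pow_le_pow_left₀ h2 h1 2
      _ = ((n:ℝ) + ℓ) ^ (2 * (myPairs ℓ).card) := by
          rw [← pow_mul, Nat.mul_comm]
      _ = _ := by rw [two_card_myPairs]
  calc ∑ f ∈ (young_finite ℓ n).toFinset, weylDim ℓ f ^ 2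
      ≤ (young_finite ℓ n).toFinset.card • (((n:ℝ) + ℓ) ^ (ℓ*(ℓ+1))) :=
        Finset.sum_le_card_nsmul _ _ _ hbound
    _ = ((young_finite ℓ n).toFinset.card : ℝ) * ((n:ℝ) + ℓ) ^ (ℓ*(ℓ+1)) := by
        rw [nsmul_eq_mul]
    _ ≤ ((n:ℝ)+1) ^ (ℓ-1) * ((n:ℝ) + ℓ) ^ (ℓ*(ℓ+1)) := by
        apply mul_le_mul_of_nonneg_right _ (by positivity)
        have h := young_card_le ℓ n hℓ
        calc ((young_finite ℓ n).toFinset.card : ℝ) ≤ (((n+1) ^ (ℓ-1) : ℕ) : ℝ) := by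
              exact_mod_cast h
          _ = ((n:ℝ)+1) ^ (ℓ-1) := by push_cast; ring
    _ ≤ (((ℓ:ℝ)+1) * n) ^ (ℓ-1) * (((ℓ:ℝ)+1) * n) ^ (ℓ*(ℓ+1)) := by
        apply mul_le_mul (pow_le_pow_left₀ (by positivity) ?_ _)
          (pow_le_pow_left₀ (by positivity) ?_ _) (by positivity) (by positivity)
        · nlinarith
        · nlinarith
    _ = _ := by
        rw [← pow_add, Nat.add_comm, exp_eq ℓ hℓ, mul_pow]


lemma one_le_deltaDim (ℓ n : ℕ) (hℓ : 1 ≤ ℓ) : 1 ≤ deltaDim ℓ n := by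
  rw [deltaDim_eq]
  set f0 : Fin (ℓ+1) → ℕ := fun j => if j = 0 then n else 0 with hf0
  have ha0 : Antitone f0 := by
    intro i j hij
    by_cases hj : j = 0
    · have hi : i = 0 := by subst hj; exact Fin.le_zero_iff.mp hij
      simp [hf0, hi, hj]
    · simp [hf0, hj]
  have hmem : f0 ∈ (young_finite ℓ n).toFinset := by
    simp only [Set.Finite.mem_toFinset, Set.mem_setOf_eq]
    refine ⟨ha0, by simp [hf0], ?_⟩
    have : (Fin.last ℓ) ≠ 0 := by
      simp [Fin.ext_iff]
      omega
    simp [hf0, this]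
  have h1 : 1 ≤ weylDim ℓ f0 ^ 2 := by
    have := one_le_weylDim ha0
    nlinarith
  calc (1:ℝ) ≤ weylDim ℓ f0 ^ 2 := h1
    _ ≤ ∑ f ∈ (young_finite ℓ n).toFinset, weylDim ℓ f ^ 2 :=
      Finset.single_le_sum (f := fun f => weylDim ℓ f ^ 2) (fun f _ => sq_nonneg _) hmem

def psiMap (ℓ n g : ℕ) (a : Fin (ℓ-1) → Fin g) (j : Fin (ℓ+1)) : ℕ :=
  if j.val = 0 then n
  else (ℓ - j.val) * (2*g) +
    (if h : 1 ≤ j.val ∧ j.val ≤ ℓ-1 then (a ⟨j.val-1, by omega⟩).val else 0)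

lemma psi_lb {ℓ n g : ℕ} (hng : 2*ℓ*g ≤ n) (a : Fin (ℓ-1) → Fin g) (j : Fin (ℓ+1)) :
    (ℓ - j.val) * (2*g) ≤ psiMap ℓ n g a j := by
  unfold psiMap
  by_cases hj : j.val = 0
  · rw [if_pos hj, hj]
    calc (ℓ - 0) * (2*g) = 2*ℓ*g := by rw [Nat.sub_zero]; ring
      _ ≤ n := hng
  · rw [if_neg hj]
    exact Nat.le_add_right _ _

lemma psi_ub {ℓ n g : ℕ} (hg1 : 1 ≤ g) (a : Fin (ℓ-1) → Fin g) (j : Fin (ℓ+1))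
    (hj : 1 ≤ j.val) :
    psiMap ℓ n g a j + 1 ≤ (ℓ - j.val) * (2*g) + g := by
  unfold psiMap
  rw [if_neg (by omega)]
  split
  · next h => have := (a ⟨j.val-1, by omega⟩).isLt; omega
  · omega

lemma psi_gap {ℓ n g : ℕ} (hg1 : 1 ≤ g) (hng : 2*ℓ*g ≤ n) (a : Fin (ℓ-1) → Fin g)
    (i j : Fin (ℓ+1)) (hij : i < j) :
    psiMap ℓ n g a j + (j.val - i.val) * g ≤ psiMap ℓ n g a i := by
  have hijv : i.val < j.val := hij
  have hjl : j.val ≤ ℓ := Fin.is_le j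
  set s := i.val
  set t := j.val
  set d := t - s with hd
  have hd1 : 1 ≤ d := by omega
  have hms : ℓ - s = (ℓ - t) + d := by omega
  have hA := psi_ub (n := n) hg1 a j (by omega)
  have hB := psi_lb hng a i
  rw [hms] at hB
  have hmul : ((ℓ - t) + d) * (2*g) = (ℓ - t)*(2*g) + d*g + d*g := by ring
  rw [hmul] at hB
  have hdg : g ≤ d*g := Nat.le_mul_of_pos_left g (by omega)
  linarith

lemma psi_antitone {ℓ n g : ℕ} (hg1 : 1 ≤ g) (hng : 2*ℓ*g ≤ n) (a : Fin (ℓ-1) → Fin g) :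
    Antitone (psiMap ℓ n g a) := by
  intro i j hij
  rcases eq_or_lt_of_le hij with h | h
  · rw [h]
  · have := psi_gap hg1 hng a i j h
    omega

lemma psi_mem {ℓ n g : ℕ} (hℓ : 1 ≤ ℓ) (hg1 : 1 ≤ g) (hng : 2*ℓ*g ≤ n)
    (a : Fin (ℓ-1) → Fin g) :
    psiMap ℓ n g a ∈ {f : Fin (ℓ + 1) → ℕ | Antitone f ∧ f 0 = n ∧ f (Fin.last ℓ) = 0} := by
  refine ⟨psi_antitone hg1 hng a, ?_, ?_⟩
  · unfold psiMap; simp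
  · unfold psiMap
    rw [if_neg (by simp [Fin.last]; omega)]
    rw [dif_neg (by simp [Fin.last]; omega)]
    simp [Fin.last]

lemma psi_inj {ℓ n g : ℕ} :
    Function.Injective (fun a : Fin (ℓ-1) → Fin g => psiMap ℓ n g a) := by
  intro a a' h
  funext i
  have hi1 : i.val + 1 < ℓ + 1 := by have := i.isLt; omega
  have heq := congrFun h ⟨i.val + 1, hi1⟩
  simp only [psiMap] at heq
  rw [if_neg (by simp), if_neg (by simp)] at heq
  have hcond : 1 ≤ i.val + 1 ∧ i.val + 1 ≤ ℓ - 1 := by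
    have := i.isLt; omega
  rw [dif_pos hcond] at heq
  rw [dif_pos hcond] at heq
  have hidx : (⟨i.val + 1 - 1, by have := i.isLt; omega⟩ : Fin (ℓ-1)) = i := by
    ext; simp
  rw [hidx] at heq
  exact Fin.ext (Nat.add_left_cancel heq)

lemma weylDim_psi_ge {ℓ n g : ℕ} (hg1 : 1 ≤ g) (hng : 2*ℓ*g ≤ n) (a : Fin (ℓ-1) → Fin g) :
    ((g:ℝ)) ^ (myPairs ℓ).card ≤ weylDim ℓ (psiMap ℓ n g a) := by
  unfold weylDim myPairs
  rw [← Finset.prod_const]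
  apply Finset.prod_le_prod
  · intro p hp; positivity
  · intro p hp
    simp only [Finset.mem_filter] at hp
    have hlt : (p.1 : ℕ) < (p.2 : ℕ) := hp.2
    have hgap := psi_gap hg1 hng a p.1 p.2 hp.2
    have hd : (0:ℝ) < ((p.2 : ℕ) : ℝ) - ((p.1 : ℕ) : ℝ) := by
      have : ((p.1 : ℕ) : ℝ) < ((p.2 : ℕ) : ℝ) := by exact_mod_cast hlt
      linarith
    rw [le_div_iff₀ hd]
    have hcast : ((psiMap ℓ n g a p.2 : ℕ) : ℝ) + (((p.2:ℕ) - (p.1:ℕ) : ℕ) : ℝ) * g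
        ≤ ((psiMap ℓ n g a p.1 : ℕ) : ℝ) := by exact_mod_cast hgap
    have hsub : (((p.2:ℕ) - (p.1:ℕ) : ℕ) : ℝ) = ((p.2:ℕ) : ℝ) - ((p.1:ℕ) : ℝ) := by
      rw [Nat.cast_sub hlt.le]
    rw [hsub] at hcast
    nlinarith [hd]

lemma deltaDim_ge {ℓ n g : ℕ} (hℓ : 1 ≤ ℓ) (hg1 : 1 ≤ g) (hng : 2*ℓ*g ≤ n) :
    ((g:ℝ)) ^ (ℓ*(ℓ+2)-1) ≤ deltaDim ℓ n := by
  classical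
  rw [deltaDim_eq]
  have himg : Finset.image (psiMap ℓ n g) Finset.univ ⊆ (young_finite ℓ n).toFinset := by
    intro f hf
    simp only [Finset.mem_image] at hf
    obtain ⟨a, -, rfl⟩ := hf
    rw [Set.Finite.mem_toFinset]
    exact psi_mem hℓ hg1 hng a
  have hsum : ∑ f ∈ Finset.image (psiMap ℓ n g) Finset.univ, weylDim ℓ f ^ 2
      ≤ ∑ f ∈ (young_finite ℓ n).toFinset, weylDim ℓ f ^ 2 :=
    Finset.sum_le_sum_of_subset_of_nonneg himg (fun f _ _ => sq_nonneg _)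
  have himage : ∑ f ∈ Finset.image (psiMap ℓ n g) Finset.univ, weylDim ℓ f ^ 2
      = ∑ a : Fin (ℓ-1) → Fin g, weylDim ℓ (psiMap ℓ n g a) ^ 2 :=
    Finset.sum_image (fun a _ a' _ h => psi_inj h)
  have hterm : ∀ a : Fin (ℓ-1) → Fin g,
      ((g:ℝ)) ^ (ℓ*(ℓ+1)) ≤ weylDim ℓ (psiMap ℓ n g a) ^ 2 := by
    intro a
    have h1 := weylDim_psi_ge hg1 hng a
    have h2 : (0:ℝ) ≤ (g:ℝ) ^ (myPairs ℓ).card := by positivity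
    calc ((g:ℝ)) ^ (ℓ*(ℓ+1)) = (((g:ℝ)) ^ (myPairs ℓ).card) ^ 2 := by
          rw [← two_card_myPairs ℓ, Nat.mul_comm 2, pow_mul]
      _ ≤ weylDim ℓ (psiMap ℓ n g a) ^ 2 := pow_le_pow_left₀ h2 h1 2
  have hcard : (Fintype.card (Fin (ℓ-1) → Fin g)) = g ^ (ℓ-1) := by
    rw [Fintype.card_fun]; simp
  calc ((g:ℝ)) ^ (ℓ*(ℓ+2)-1) = ((g:ℝ)) ^ ((ℓ-1) + ℓ*(ℓ+1)) := by
        congr 1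
        have h := exp_eq ℓ hℓ
        linarith
    _ = (g:ℝ) ^ (ℓ-1) * (g:ℝ) ^ (ℓ*(ℓ+1)) := by rw [pow_add]
    _ = (Fintype.card (Fin (ℓ-1) → Fin g)) * (g:ℝ) ^ (ℓ*(ℓ+1)) := by
        rw [hcard]; push_cast; ring
    _ ≤ ∑ a : Fin (ℓ-1) → Fin g, weylDim ℓ (psiMap ℓ n g a) ^ 2 := by
        rw [← Finset.card_univ, ← nsmul_eq_mul]
        exact Finset.card_nsmul_le_sum _ _ _ (fun a _ => hterm a)
    _ = ∑ f ∈ Finset.image (psiMap ℓ n g) Finset.univ, weylDim ℓ f ^ 2 := himage.symm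
    _ ≤ _ := hsum

/-- δ_n grows exactly like n^{ℓ(ℓ+2)−1}. -/
theorem stmt_10 (ℓ : ℕ) (hℓ : 1 ≤ ℓ) :
    ∃ c₁ c₂ : ℝ, 0 < c₁ ∧ 0 < c₂ ∧ ∀ n : ℕ, 1 ≤ n →
      c₁ * (n : ℝ) ^ (ℓ * (ℓ + 2) - 1) ≤ deltaDim ℓ n ∧
      deltaDim ℓ n ≤ c₂ * (n : ℝ) ^ (ℓ * (ℓ + 2) - 1) := by
  set E := ℓ*(ℓ+2)-1 with hE
  have hl0 : (0:ℝ) < (ℓ:ℝ) := by exact_mod_cast hℓ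
  have h4l : (0:ℝ) < 4*(ℓ:ℝ) := by linarith
  have h4 : (0:ℝ) < (4*(ℓ:ℝ))^E := pow_pos h4l E
  refine ⟨1 / (4*(ℓ:ℝ))^E, ((ℓ:ℝ)+1)^E, div_pos one_pos h4,
    pow_pos (by linarith) E, ?_⟩
  intro n hn
  constructor
  · by_cases hcase : n < 2*ℓ
    · have h1 := one_le_deltaDim ℓ n hℓ
      have hle : (n:ℝ) ≤ 4*(ℓ:ℝ) := by
        have h' : n ≤ 4*ℓ := by omega
        have := (Nat.cast_le (α := ℝ)).2 h'
        push_cast at this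
        linarith
      have hp : (n:ℝ)^E ≤ (4*(ℓ:ℝ))^E := pow_le_pow_left₀ (by positivity) hle E
      calc 1/(4*(ℓ:ℝ))^E * (n:ℝ)^E ≤ 1/(4*(ℓ:ℝ))^E * (4*(ℓ:ℝ))^E :=
            mul_le_mul_of_nonneg_left hp (by positivity)
        _ = 1 := by field_simp
        _ ≤ deltaDim ℓ n := h1
    · push_neg at hcase
      set g := n / (2*ℓ) with hg
      have h2l : 0 < 2*ℓ := by omega
      have hg1 : 1 ≤ g := (Nat.one_le_div_iff h2l).2 hcase
      have hng : 2*ℓ*g ≤ n := by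
        rw [hg, Nat.mul_comm]
        exact Nat.div_mul_le_self n (2*ℓ)
      have hδ := deltaDim_ge (n := n) hℓ hg1 hng
      have hn4 : (n:ℝ) ≤ 4*(ℓ:ℝ)*(g:ℝ) := by
        have hmod := Nat.div_add_mod n (2*ℓ)
        have hr : n % (2*ℓ) < 2*ℓ := Nat.mod_lt n h2l
        have h2lg : 2*ℓ ≤ 2*ℓ*g := Nat.le_mul_of_pos_right _ (by omega)
        have hfin : n ≤ 4*ℓ*g := by
          have h4e : 4*ℓ*g = 2*ℓ*g + 2*ℓ*g := by ring
          rw [h4e]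
          rw [← hg] at hmod
          linarith
        have := (Nat.cast_le (α := ℝ)).2 hfin
        push_cast at this
        linarith
      have hpow : (n:ℝ)^E ≤ (4*(ℓ:ℝ))^E * (g:ℝ)^E := by
        calc (n:ℝ)^E ≤ (4*(ℓ:ℝ)*(g:ℝ))^E := pow_le_pow_left₀ (by positivity) hn4 E
          _ = (4*(ℓ:ℝ))^E * (g:ℝ)^E := by rw [mul_pow]
      calc 1/(4*(ℓ:ℝ))^E * (n:ℝ)^E ≤ 1/(4*(ℓ:ℝ))^E * ((4*(ℓ:ℝ))^E * (g:ℝ)^E) :=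
            mul_le_mul_of_nonneg_left hpow (by positivity)
        _ = (g:ℝ)^E := by field_simp
        _ ≤ deltaDim ℓ n := hδ
  · exact deltaDim_le_bound ℓ n hℓ hn
end

section
/- Let ℓ ≥ 1. For n ∈ ℕ define δ_n := Σ_λ W(λ)², where the sum runs over all weakly decreasing functions λ : {0, 1, …, ℓ} → ℕ with λ(0) = n and λ(ℓ) = 0, and W(λ) := ∏_{0 ≤ i < j ≤ ℓ} (λ(i) − λ(j) + j − i)/(j − i). Then for a real number p > 0, the series Σ_{n ≥ 1} δ_n·n^{−p} converges if and only if p > ℓ(ℓ+2). -/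
namespace Stmt11Aux
open Finset

def pairs (ℓ : ℕ) : Finset (Fin (ℓ+1) × Fin (ℓ+1)) :=
  Finset.univ.filter (fun p => p.1 < p.2)

lemma pairs_card (ℓ : ℕ) : (pairs ℓ).card * 2 = (ℓ+1) * ℓ := by
  have h1 : (pairs ℓ).card = ∑ j : Fin (ℓ+1), (Finset.Iio j).card := by
    rw [pairs, Finset.card_eq_sum_card_fiberwise
      (f := fun p : Fin (ℓ+1) × Fin (ℓ+1) => p.2) (t := Finset.univ) (fun _ _ => mem_univ _)]
    refine Finset.sum_congr rfl (fun j _ => ?_)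
    apply Finset.card_bij (fun p _ => p.1)
    · intro p hp
      simp only [mem_filter, mem_univ, true_and] at hp
      simpa [Finset.mem_Iio] using hp.2 ▸ hp.1
    · intro p hp q hq h
      simp only [mem_filter] at hp hq
      exact Prod.ext h (hp.2.trans hq.2.symm)
    · intro i hi
      exact ⟨(i, j), by simpa [Finset.mem_Iio] using Finset.mem_Iio.mp hi, rfl⟩
  have h2 : ∑ j : Fin (ℓ+1), (Finset.Iio j).card = ∑ j ∈ Finset.range (ℓ+1), j := by
    simp only [Fin.card_Iio]
    exact Fin.sum_univ_eq_sum_range (fun j => j) (ℓ+1)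
  rw [h1, h2, Finset.sum_range_id_mul_two]
  simp [Nat.mul_comm]


def S (ℓ n : ℕ) : Set (Fin (ℓ+1) → ℕ) :=
  {f | Antitone f ∧ f 0 = n ∧ f (Fin.last ℓ) = 0}

lemma S_finite (ℓ n : ℕ) : (S ℓ n).Finite := by
  have : S ℓ n ⊆ Set.pi Set.univ (fun _ : Fin (ℓ+1) => Set.Iic n) := by
    rintro f ⟨hf, h0, -⟩ k -
    simpa [Set.mem_Iic] using h0 ▸ hf (Fin.zero_le k)
  exact (Set.Finite.pi (fun _ => Set.finite_Iic n)).subset this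

lemma deltaDim_eq (ℓ n : ℕ) :
    deltaDim ℓ n = ∑ f ∈ (S_finite ℓ n).toFinset, (weylDim ℓ f)^2 :=
  finsum_mem_eq_finite_toFinset_sum _ (S_finite ℓ n)

lemma factor_le {ℓ n : ℕ} {f : Fin (ℓ+1) → ℕ} (hf : f ∈ S ℓ n) {q : Fin (ℓ+1) × Fin (ℓ+1)}
    (hq : q ∈ pairs ℓ) :
    (((f q.1 : ℝ) - (f q.2 : ℝ) + ((q.2 : ℕ) : ℝ) - ((q.1 : ℕ) : ℝ)) /
      (((q.2 : ℕ) : ℝ) - ((q.1 : ℕ) : ℝ))) ≤ ((ℓ:ℝ)+1) * ((n:ℝ)+1) := by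
  obtain ⟨hanti, h0, -⟩ := hf
  have hlt : q.1 < q.2 := by simpa [pairs] using hq
  have hvlt : (q.1 : ℕ) < (q.2 : ℕ) := hlt
  have hD : (1:ℝ) ≤ ((q.2 : ℕ) : ℝ) - ((q.1 : ℕ) : ℝ) := by
    have : ((q.1:ℕ):ℝ) + 1 ≤ ((q.2:ℕ):ℝ) := by exact_mod_cast Nat.succ_le_of_lt hvlt
    linarith
  have hfn1 : (f q.1 : ℝ) ≤ n := by exact_mod_cast h0 ▸ hanti (Fin.zero_le q.1)
  have hfn2 : (0:ℝ) ≤ (f q.2 : ℝ) := by positivity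
  have hq2 : ((q.2:ℕ):ℝ) ≤ ℓ := by exact_mod_cast Nat.lt_succ_iff.mp q.2.isLt
  have hq1 : (0:ℝ) ≤ ((q.1:ℕ):ℝ) := by positivity
  have hnum : (f q.1 : ℝ) - (f q.2 : ℝ) + ((q.2 : ℕ) : ℝ) - ((q.1 : ℕ) : ℝ) ≤ (n:ℝ) + ℓ := by
    linarith
  refine (div_le_iff₀ (by linarith)).2 ?_
  have h1 : (n:ℝ) + ℓ ≤ ((ℓ:ℝ)+1) * ((n:ℝ)+1) := by nlinarith [Nat.cast_nonneg (α := ℝ) n, Nat.cast_nonneg (α := ℝ) ℓ]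
  have h2 : ((ℓ:ℝ)+1) * ((n:ℝ)+1) ≤ ((ℓ:ℝ)+1) * ((n:ℝ)+1) * (((q.2 : ℕ) : ℝ) - ((q.1 : ℕ) : ℝ)) := by
    nlinarith [Nat.cast_nonneg (α := ℝ) n, Nat.cast_nonneg (α := ℝ) ℓ]
  linarith


lemma factor_nonneg {ℓ : ℕ} {f : Fin (ℓ+1) → ℕ} (hanti : Antitone f)
    {q : Fin (ℓ+1) × Fin (ℓ+1)} (hq : q ∈ pairs ℓ) :
    0 ≤ (((f q.1 : ℝ) - (f q.2 : ℝ) + ((q.2 : ℕ) : ℝ) - ((q.1 : ℕ) : ℝ)) /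
      (((q.2 : ℕ) : ℝ) - ((q.1 : ℕ) : ℝ))) := by
  have hlt : q.1 < q.2 := by simpa [pairs] using hq
  have hD : ((q.1:ℕ):ℝ) < ((q.2:ℕ):ℝ) := by exact_mod_cast hlt
  have hmono : (f q.2 : ℝ) ≤ (f q.1 : ℝ) := by exact_mod_cast hanti hlt.le
  apply div_nonneg (by linarith) (by linarith)

lemma weylDim_nonneg {ℓ : ℕ} {f : Fin (ℓ+1) → ℕ} (hanti : Antitone f) :
    0 ≤ weylDim ℓ f :=
  Finset.prod_nonneg (fun q hq => factor_nonneg hanti hq)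

lemma weylDim_sq_le {ℓ n : ℕ} {f : Fin (ℓ+1) → ℕ} (hf : f ∈ S ℓ n) :
    (weylDim ℓ f)^2 ≤ (((ℓ:ℝ)+1) * ((n:ℝ)+1))^(ℓ*(ℓ+1)) := by
  have hW : weylDim ℓ f ≤ (((ℓ:ℝ)+1) * ((n:ℝ)+1))^(pairs ℓ).card := by
    rw [weylDim, ← Finset.prod_const]
    exact Finset.prod_le_prod (fun q hq => factor_nonneg hf.1 hq) (fun q hq => factor_le hf hq)
  have h0 : (0:ℝ) ≤ weylDim ℓ f := weylDim_nonneg hf.1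
  calc (weylDim ℓ f)^2 ≤ ((((ℓ:ℝ)+1) * ((n:ℝ)+1))^(pairs ℓ).card)^2 := by
        exact pow_le_pow_left₀ h0 hW 2
    _ = (((ℓ:ℝ)+1) * ((n:ℝ)+1))^((pairs ℓ).card * 2) := by rw [pow_mul]
    _ = (((ℓ:ℝ)+1) * ((n:ℝ)+1))^(ℓ*(ℓ+1)) := by rw [pairs_card, Nat.mul_comm]

lemma card_S_le {ℓ : ℕ} (hℓ : 1 ≤ ℓ) (n : ℕ) :
    ((S_finite ℓ n).toFinset).card ≤ (n+1)^(ℓ-1) := by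
  have key : ∀ f ∈ (S_finite ℓ n).toFinset, ∀ k : Fin (ℓ+1), f k ≤ n := by
    intro f hf k
    rw [Set.Finite.mem_toFinset] at hf
    exact hf.2.1 ▸ hf.1 (Fin.zero_le k)
  calc ((S_finite ℓ n).toFinset).card
      ≤ (Finset.univ : Finset (Fin (ℓ-1) → Fin (n+1))).card := by
        apply Finset.card_le_card_of_injOn
          (fun f => fun i : Fin (ℓ-1) =>
            if h : f ⟨i.val+1, by omega⟩ ≤ n then (⟨f ⟨i.val+1, by omega⟩, by omega⟩ : Fin (n+1)) else 0)
          (fun _ _ => Finset.mem_univ _)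
        intro f hf g hg h
        simp only [Finset.mem_coe, Set.Finite.mem_toFinset] at hf hg
        funext k
        rcases Nat.eq_zero_or_pos k.val with hk0 | hk1
        · have : k = 0 := Fin.ext hk0
          rw [this, hf.2.1, hg.2.1]
        rcases Nat.lt_or_ge k.val ℓ with hkl | hkl
        · have hkml : k.val - 1 < ℓ - 1 := by omega
          have := congrFun h ⟨k.val - 1, hkml⟩
          simp only at this
          have hkk : (⟨(k.val - 1) + 1, by omega⟩ : Fin (ℓ+1)) = k := Fin.ext (by simp; omega)
          simp only [hkk] at this
          have hfk : f k ≤ n := hf.2.1 ▸ hf.1 (Fin.zero_le k)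
          have hgk : g k ≤ n := hg.2.1 ▸ hg.1 (Fin.zero_le k)
          rw [dif_pos hfk, dif_pos hgk] at this
          exact congrArg Fin.val this
        · have : k = Fin.last ℓ := Fin.ext (by simp; omega)
          rw [this, hf.2.2, hg.2.2]
    _ = (n+1)^(ℓ-1) := by simp

lemma deltaDim_nonneg (ℓ n : ℕ) : 0 ≤ deltaDim ℓ n := by
  rw [deltaDim_eq]
  exact Finset.sum_nonneg (fun f hf => sq_nonneg _)

lemma deltaDim_le {ℓ : ℕ} (hℓ : 1 ≤ ℓ) (n : ℕ) :
    deltaDim ℓ n ≤ ((ℓ:ℝ)+1)^(ℓ*(ℓ+1)) * ((n:ℝ)+1)^(ℓ*(ℓ+2)-1) := by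
  have hexp : (ℓ-1) + ℓ*(ℓ+1) = ℓ*(ℓ+2)-1 := by
    obtain ⟨k, rfl⟩ := Nat.exists_eq_add_of_le hℓ
    have h1 : (1+k)*(1+k+2) = (k + (1+k)*(1+k+1)) + 1 := by ring
    omega
  rw [deltaDim_eq]
  calc ∑ f ∈ (S_finite ℓ n).toFinset, (weylDim ℓ f)^2
      ≤ ((S_finite ℓ n).toFinset).card • ((((ℓ:ℝ)+1) * ((n:ℝ)+1))^(ℓ*(ℓ+1))) :=
        Finset.sum_le_card_nsmul _ _ _ (fun f hf =>
          weylDim_sq_le ((Set.Finite.mem_toFinset _).mp hf))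
    _ ≤ (((n:ℝ)+1)^(ℓ-1)) * ((((ℓ:ℝ)+1) * ((n:ℝ)+1))^(ℓ*(ℓ+1))) := by
        rw [nsmul_eq_mul]
        apply mul_le_mul_of_nonneg_right _ (by positivity)
        calc (((S_finite ℓ n).toFinset).card : ℝ) ≤ (((n+1)^(ℓ-1) : ℕ) : ℝ) := by
              exact_mod_cast card_S_le hℓ n
          _ = ((n:ℝ)+1)^(ℓ-1) := by push_cast; ring
    _ = ((ℓ:ℝ)+1)^(ℓ*(ℓ+1)) * ((n:ℝ)+1)^(ℓ*(ℓ+2)-1) := by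
        rw [mul_pow, ← hexp, pow_add]
        ring


/-- The test functions for the lower bound. -/
def F (ℓ n m : ℕ) (s : Fin (ℓ-1) → Fin m) : Fin (ℓ+1) → ℕ := fun k =>
  if h0 : k.val = 0 then n
  else if h : k.val < ℓ then (ℓ - k.val) * (2*ℓ*m) + (s ⟨k.val - 1, by omega⟩).val
  else 0

lemma arith2 {ℓ m iv jv A B : ℕ} (hm : 1 ≤ m) (h2 : iv < jv) (h3 : jv < ℓ) (hA : A < m) :
    (ℓ - jv) * (2*ℓ*m) + A + m * (jv - iv) ≤ (ℓ - iv) * (2*ℓ*m) + B := by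
  obtain ⟨t, ht⟩ : ∃ t, jv = iv + (t+1) := ⟨jv - iv - 1, by omega⟩
  subst ht
  obtain ⟨c, hc⟩ : ∃ c, ℓ = iv + (t+1) + c + 1 := ⟨ℓ - (iv+t+2), by omega⟩
  subst hc
  have e : iv + (t+1) + c + 1 - (iv + (t+1)) = c + 1 := by omega
  have e2 : iv + (t+1) + c + 1 - iv = t + c + 2 := by omega
  have e3 : iv + (t+1) - iv = t+1 := by omega
  rw [e, e2, e3]
  have hls : 1 ≤ iv + (t+1) + c + 1 := by omega
  nlinarith [hA, hm, Nat.le_mul_of_pos_left m (show 0 < iv + (t+1) + c + 1 by omega)]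

lemma F_gap {ℓ n m : ℕ} (hℓ : 1 ≤ ℓ) (hm : 1 ≤ m) (hn : 4*ℓ*ℓ*m ≤ n)
    (s : Fin (ℓ-1) → Fin m) {i j : Fin (ℓ+1)} (hij : i < j) :
    F ℓ n m s j + m * (j.val - i.val) ≤ F ℓ n m s i := by
  have hjl : j.val ≤ ℓ := Nat.lt_succ_iff.mp j.isLt
  have hij' : i.val < j.val := hij
  have e1 : m ≤ ℓ*ℓ*m := Nat.le_mul_of_pos_left m (by positivity)
  have e2 : m*ℓ ≤ ℓ*ℓ*m := by
    calc m*ℓ ≤ (ℓ*m)*ℓ := Nat.mul_le_mul_right ℓ (Nat.le_mul_of_pos_left m (by omega))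
      _ = ℓ*ℓ*m := by ring
  unfold F
  rcases Nat.eq_zero_or_pos i.val with hi0 | hi1
  · rw [dif_pos hi0]
    rcases Nat.lt_or_ge j.val ℓ with hjlt | hjge
    · rw [dif_neg (show ¬(j.val = 0) by omega), dif_pos hjlt]
      have hsj : (s ⟨j.val - 1, by omega⟩).val < m := Fin.isLt _
      have hc : ℓ - j.val ≤ ℓ := Nat.sub_le _ _
      have hjv : j.val - i.val ≤ ℓ := by omega
      calc (ℓ - j.val) * (2*ℓ*m) + (s ⟨j.val - 1, by omega⟩).val + m * (j.val - i.val)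
          ≤ ℓ * (2*ℓ*m) + m + m * ℓ := by
            exact add_le_add (add_le_add (Nat.mul_le_mul_right _ hc) hsj.le) (Nat.mul_le_mul_left _ hjv)
        _ ≤ 4*ℓ*ℓ*m := by linarith
        _ ≤ n := hn
    · rw [dif_neg (show ¬(j.val = 0) by omega), dif_neg (show ¬(j.val < ℓ) by omega)]
      have : m * (j.val - i.val) ≤ m * ℓ := Nat.mul_le_mul_left _ (by omega)
      calc 0 + m * (j.val - i.val) ≤ m * ℓ := by omega
        _ ≤ 4*ℓ*ℓ*m := by linarith
        _ ≤ n := hn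
  · have hil : i.val < ℓ := by omega
    rw [dif_neg (show ¬(j.val = 0) by omega), dif_neg (show ¬(i.val = 0) by omega), dif_pos hil]
    rcases Nat.lt_or_ge j.val ℓ with hjlt | hjge
    · rw [dif_pos hjlt]
      exact arith2 hm hij' hjlt (Fin.isLt _)
    · rw [dif_neg (show ¬(j.val < ℓ) by omega)]
      have : m * (j.val - i.val) ≤ (ℓ - i.val) * (2*ℓ*m) := by
        have h1 : j.val - i.val ≤ ℓ - i.val := by omega
        calc m * (j.val - i.val) ≤ m * (ℓ - i.val) := Nat.mul_le_mul_left _ h1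
          _ ≤ (ℓ - i.val) * (2*ℓ*m) := by
            rw [Nat.mul_comm]
            exact Nat.mul_le_mul_left _ (by nlinarith)
      omega

lemma F_mem {ℓ n m : ℕ} (hℓ : 1 ≤ ℓ) (hm : 1 ≤ m) (hn : 4*ℓ*ℓ*m ≤ n)
    (s : Fin (ℓ-1) → Fin m) : F ℓ n m s ∈ S ℓ n := by
  refine ⟨?_, ?_, ?_⟩
  · intro a b hab
    rcases eq_or_lt_of_le hab with rfl | h
    · exact le_rfl
    · have := F_gap hℓ hm hn s h; omega
  · rw [F]; simp
  · show F ℓ n m s (Fin.last ℓ) = 0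
    rw [F]
    rw [dif_neg (show ¬((Fin.last ℓ).val = 0) from by simp only [Fin.val_last]; omega),
        dif_neg (show ¬((Fin.last ℓ).val < ℓ) from by simp only [Fin.val_last]; omega)]

lemma F_inj {ℓ n m : ℕ} (hℓ : 1 ≤ ℓ) : Function.Injective (F ℓ n m) := by
  intro s s' h
  funext i
  have hi1 : i.val + 1 < ℓ + 1 := by have := i.isLt; omega
  have hi2 : i.val + 1 < ℓ := by have := i.isLt; omega
  have hk := congrFun h ⟨i.val + 1, hi1⟩
  rw [F, F] at hk
  simp only at hk
  rw [dif_neg (show ¬((⟨i.val + 1, hi1⟩ : Fin (ℓ+1)).val = 0) by simp), dif_pos hi2,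
      dif_neg (show ¬((⟨i.val + 1, hi1⟩ : Fin (ℓ+1)).val = 0) by simp), dif_pos hi2] at hk
  have hidx : (⟨i.val + 1 - 1, by omega⟩ : Fin (ℓ-1)) = i := Fin.ext (by simp)
  rw [hidx] at hk
  exact Fin.ext (Nat.add_left_cancel hk)

lemma weylDim_F_sq_ge {ℓ n m : ℕ} (hℓ : 1 ≤ ℓ) (hm : 1 ≤ m) (hn : 4*ℓ*ℓ*m ≤ n)
    (s : Fin (ℓ-1) → Fin m) :
    ((m:ℝ))^(ℓ*(ℓ+1)) ≤ (weylDim ℓ (F ℓ n m s))^2 := by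
  have hfac : ∀ q ∈ pairs ℓ,
      (m:ℝ) ≤ (((F ℓ n m s q.1 : ℝ) - (F ℓ n m s q.2 : ℝ) + ((q.2 : ℕ) : ℝ) - ((q.1 : ℕ) : ℝ)) /
        (((q.2 : ℕ) : ℝ) - ((q.1 : ℕ) : ℝ))) := by
    intro q hq
    have hlt : q.1 < q.2 := by simpa [pairs] using hq
    have hD : ((q.1:ℕ):ℝ) < ((q.2:ℕ):ℝ) := by exact_mod_cast hlt
    have hgap := F_gap hℓ hm hn s hlt
    have hgapR : (F ℓ n m s q.2 : ℝ) + (m:ℝ) * (((q.2:ℕ):ℝ) - ((q.1:ℕ):ℝ)) ≤ (F ℓ n m s q.1 : ℝ) := by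
      have hsub : ((q.2.val - q.1.val : ℕ) : ℝ) = ((q.2:ℕ):ℝ) - ((q.1:ℕ):ℝ) :=
        Nat.cast_sub (le_of_lt hlt)
      rw [← hsub, ← Nat.cast_mul]
      exact_mod_cast hgap
    rw [le_div_iff₀ (by linarith)]
    linarith
  have hW : (m:ℝ)^(pairs ℓ).card ≤ weylDim ℓ (F ℓ n m s) := by
    rw [weylDim, ← Finset.prod_const]
    exact Finset.prod_le_prod (fun q hq => by positivity) hfac
  calc ((m:ℝ))^(ℓ*(ℓ+1)) = ((m:ℝ)^(pairs ℓ).card)^2 := by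
        rw [← pow_mul, pairs_card, Nat.mul_comm]
    _ ≤ (weylDim ℓ (F ℓ n m s))^2 := pow_le_pow_left₀ (by positivity) hW 2

lemma deltaDim_ge {ℓ : ℕ} (hℓ : 1 ≤ ℓ) {n m : ℕ} (hm : 1 ≤ m) (hn : 4*ℓ*ℓ*m ≤ n) :
    ((m:ℝ))^(ℓ*(ℓ+2)-1) ≤ deltaDim ℓ n := by
  have hexp : (ℓ-1) + ℓ*(ℓ+1) = ℓ*(ℓ+2)-1 := by
    obtain ⟨k, rfl⟩ := Nat.exists_eq_add_of_le hℓ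
    have h1 : (1+k)*(1+k+2) = (k + (1+k)*(1+k+1)) + 1 := by ring
    omega
  have himg : (Finset.univ.image (F ℓ n m)) ⊆ (S_finite ℓ n).toFinset := by
    intro f hf
    obtain ⟨s, -, rfl⟩ := Finset.mem_image.mp hf
    exact (Set.Finite.mem_toFinset _).mpr (F_mem hℓ hm hn s)
  have hcard : (Finset.univ.image (F ℓ n m)).card = m^(ℓ-1) := by
    rw [Finset.card_image_of_injective _ (F_inj hℓ), Finset.card_univ]
    simp
  rw [deltaDim_eq]
  calc ((m:ℝ))^(ℓ*(ℓ+2)-1) = ((m^(ℓ-1) : ℕ):ℝ) * ((m:ℝ))^(ℓ*(ℓ+1)) := by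
        rw [← hexp, pow_add]; push_cast; ring
    _ = (Finset.univ.image (F ℓ n m)).card • (((m:ℝ))^(ℓ*(ℓ+1))) := by
        rw [hcard, nsmul_eq_mul]
        try push_cast
        try ring
    _ ≤ ∑ f ∈ Finset.univ.image (F ℓ n m), (weylDim ℓ f)^2 := by
        apply Finset.card_nsmul_le_sum
        intro f hf
        obtain ⟨s, -, rfl⟩ := Finset.mem_image.mp hf
        exact weylDim_F_sq_ge hℓ hm hn s
    _ ≤ ∑ f ∈ (S_finite ℓ n).toFinset, (weylDim ℓ f)^2 :=
        Finset.sum_le_sum_of_subset_of_nonneg himg (fun f _ _ => sq_nonneg _)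



lemma deltaDim_le' {ℓ : ℕ} (hℓ : 1 ≤ ℓ) (n : ℕ) :
    deltaDim ℓ (n+1) ≤ (((ℓ:ℝ)+1)^(ℓ*(ℓ+1)) * 2^(ℓ*(ℓ+2)-1)) * ((n:ℝ)+1)^(ℓ*(ℓ+2)-1) := by
  calc deltaDim ℓ (n+1) ≤ ((ℓ:ℝ)+1)^(ℓ*(ℓ+1)) * (((n+1:ℕ):ℝ)+1)^(ℓ*(ℓ+2)-1) := deltaDim_le hℓ (n+1)
    _ ≤ ((ℓ:ℝ)+1)^(ℓ*(ℓ+1)) * (2*((n:ℝ)+1))^(ℓ*(ℓ+2)-1) := by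
        apply mul_le_mul_of_nonneg_left _ (by positivity)
        apply pow_le_pow_left₀ (by positivity)
        push_cast
        linarith
    _ = (((ℓ:ℝ)+1)^(ℓ*(ℓ+1)) * 2^(ℓ*(ℓ+2)-1)) * ((n:ℝ)+1)^(ℓ*(ℓ+2)-1) := by
        rw [mul_pow]; ring

end Stmt11Aux

open Stmt11Aux in
set_option maxHeartbeats 1000000 in
/-- (Summability content of Theorem 5.9.)  The series
Σ_{n ≥ 1} δ_n n^{−p} converges iff p > ℓ(ℓ+2); i.e. the operator D̃ on
L²(SU_q(ℓ+1)) is p-summable iff p > ℓ(ℓ+2). -/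
theorem stmt_11 (ℓ : ℕ) (hℓ : 1 ≤ ℓ) (p : ℝ) (hp : 0 < p) :
    Summable (fun n : ℕ => deltaDim ℓ (n + 1) * ((n + 1 : ℕ) : ℝ) ^ (-p)) ↔
      (ℓ * (ℓ + 2) : ℝ) < p := by
  set d : ℕ := ℓ*(ℓ+2)-1 with hd
  have hd3 : 1 ≤ ℓ*(ℓ+2) := by nlinarith
  have hdR : (d:ℝ) = (ℓ:ℝ)*((ℓ:ℝ)+2) - 1 := by
    rw [hd, Nat.cast_sub hd3]; push_cast; ring
  constructor
  · -- summable → p > ℓ(ℓ+2)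
    intro hsum
    by_contra hnp
    push_neg at hnp
    set N : ℕ := 4*ℓ*ℓ with hN
    have hshift : Summable (fun n : ℕ =>
        deltaDim ℓ ((n + N) + 1) * (((n + N) + 1 : ℕ) : ℝ) ^ (-p)) :=
      (summable_nat_add_iff N).2 hsum
    set c : ℝ := (1/(8*(ℓ:ℝ)*(ℓ:ℝ)))^d with hc
    have hcpos : 0 < c := by
      rw [hc]; positivity
    have key : ∀ n : ℕ, c * (((n + N + 1 : ℕ)):ℝ)⁻¹ ≤
        deltaDim ℓ ((n + N) + 1) * (((n + N) + 1 : ℕ) : ℝ) ^ (-p) := by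
      intro n
      set M : ℕ := n + N + 1 with hM
      have hNpos : 0 < 4*ℓ*ℓ := by positivity
      have hNM : 4*ℓ*ℓ ≤ M := by omega
      set m : ℕ := M / (4*ℓ*ℓ) with hm
      have hm1 : 1 ≤ m := (Nat.one_le_div_iff hNpos).mpr hNM
      have hn' : 4*ℓ*ℓ*m ≤ M := by
        calc 4*ℓ*ℓ*m = m * (4*ℓ*ℓ) := by ring
          _ ≤ M := Nat.div_mul_le_self M (4*ℓ*ℓ)
      have hδ : ((m:ℝ))^d ≤ deltaDim ℓ M := deltaDim_ge hℓ hm1 hn'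
      have h3 : M < (m+1) * (4*ℓ*ℓ) := (Nat.div_lt_iff_lt_mul hNpos).mp (Nat.lt_succ_self m)
      have h4 : M ≤ 8*ℓ*ℓ*m := by nlinarith
      have hMR : (M:ℝ) ≤ 8*(ℓ:ℝ)*(ℓ:ℝ)*(m:ℝ) := by exact_mod_cast h4
      have hMpos : (0:ℝ) < M := by positivity
      have hM1 : (1:ℝ) ≤ (M:ℝ) := by exact_mod_cast Nat.one_le_iff_ne_zero.mpr (by omega)
      have hstep1 : c * (M:ℝ)^(d:ℕ) ≤ ((m:ℝ))^d := by
        have hdiv : (M:ℝ)/(8*(ℓ:ℝ)*(ℓ:ℝ)) ≤ (m:ℝ) := by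
          rw [div_le_iff₀ (by positivity)]
          linarith
        calc c * (M:ℝ)^(d:ℕ) = ((M:ℝ)/(8*(ℓ:ℝ)*(ℓ:ℝ)))^d := by
              rw [hc, div_pow, div_pow, one_pow]
              field_simp
          _ ≤ ((m:ℝ))^d := pow_le_pow_left₀ (by positivity) hdiv d
      have hstep2 : (M:ℝ)⁻¹ ≤ (M:ℝ)^((d:ℝ)) * (M:ℝ)^(-p) := by
        rw [← Real.rpow_add hMpos, ← Real.rpow_neg_one (M:ℝ)]
        apply Real.rpow_le_rpow_of_exponent_le hM1
        rw [hdR]; linarith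
      calc c * ((M:ℕ):ℝ)⁻¹ ≤ c * ((M:ℝ)^((d:ℝ)) * (M:ℝ)^(-p)) :=
            mul_le_mul_of_nonneg_left hstep2 hcpos.le
        _ = (c * (M:ℝ)^(d:ℕ)) * (M:ℝ)^(-p) := by
            rw [Real.rpow_natCast]; ring
        _ ≤ ((m:ℝ))^d * (M:ℝ)^(-p) :=
            mul_le_mul_of_nonneg_right hstep1 (Real.rpow_nonneg hMpos.le _)
        _ ≤ deltaDim ℓ M * (M:ℝ)^(-p) :=
            mul_le_mul_of_nonneg_right hδ (Real.rpow_nonneg hMpos.le _)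
    have hsum2 : Summable (fun n : ℕ => c * (((n + N + 1 : ℕ)):ℝ)⁻¹) :=
      Summable.of_nonneg_of_le
        (fun n => by positivity) key hshift
    have hsum3 : Summable (fun n : ℕ => (((n + N + 1 : ℕ)):ℝ)⁻¹) :=
      (summable_mul_left_iff hcpos.ne').mp hsum2
    have hsum3' : Summable (fun n : ℕ => ((((n + (N+1)) : ℕ)):ℝ)⁻¹) :=
      hsum3.congr (fun n => by rw [show n + N + 1 = n + (N+1) from by omega])
    have hsum4 : Summable (fun n : ℕ => ((n:ℕ):ℝ)⁻¹) :=
      (summable_nat_add_iff (f := fun n : ℕ => ((n:ℕ):ℝ)⁻¹) (N+1)).mp hsum3'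
    exact Real.not_summable_natCast_inv hsum4
  · -- p > ℓ(ℓ+2) → summable
    intro hpgt
    set C : ℝ := ((ℓ:ℝ)+1)^(ℓ*(ℓ+1)) * 2^(ℓ*(ℓ+2)-1) with hC
    have hbase : Summable (fun n : ℕ => ((n:ℝ)) ^ ((d:ℝ) - p)) :=
      Real.summable_nat_rpow.mpr (by rw [hdR]; linarith)
    have hshift : Summable (fun n : ℕ => (((n+1:ℕ)):ℝ) ^ ((d:ℝ) - p)) :=
      (summable_nat_add_iff 1).2 hbase
    apply Summable.of_nonneg_of_le
      (fun n => mul_nonneg (deltaDim_nonneg ℓ (n+1)) (Real.rpow_nonneg (by positivity) _))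
      (fun n => ?_) (hshift.mul_left C)
    have hpos : (0:ℝ) < ((n+1:ℕ):ℝ) := by positivity
    calc deltaDim ℓ (n+1) * ((n+1:ℕ):ℝ)^(-p)
        ≤ (C * ((n:ℝ)+1)^d) * ((n+1:ℕ):ℝ)^(-p) :=
          mul_le_mul_of_nonneg_right (deltaDim_le' hℓ n) (Real.rpow_nonneg hpos.le _)
      _ = C * ((n+1:ℕ):ℝ)^((d:ℝ) - p) := by
          have : ((n:ℝ)+1) = ((n+1:ℕ):ℝ) := by push_cast; ring
          rw [this, ← Real.rpow_natCast ((n+1:ℕ):ℝ) d, mul_assoc, ← Real.rpow_add hpos,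
            sub_eq_add_neg]
end

section
/- Let ℓ ≥ 1. For n, k ∈ ℕ with k ≤ n, let μ_{n,k} : {0, 1, …, ℓ} → ℕ be the weakly decreasing function with μ_{n,k}(0) = n, μ_{n,k}(j) = k for 1 ≤ j ≤ ℓ−1, and μ_{n,k}(ℓ) = 0, and set W(μ_{n,k}) := ∏_{0 ≤ i < j ≤ ℓ} (μ_{n,k}(i) − μ_{n,k}(j) + j − i)/(j − i). Define δ'_n := Σ_{k=0}^{n} W(μ_{n,k}). Then there exist constants c₁, c₂ > 0 such that for all n ≥ 1, c₁·n^{2ℓ} ≤ δ'_n ≤ c₂·n^{2ℓ}. -/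
/-- The Young tableau μ_{n,k} = (n, k, k, …, k, 0) : {0, …, ℓ} → ℕ. -/
def muTab (ℓ n k : ℕ) : Fin (ℓ + 1) → ℕ :=
  fun j => if (j : ℕ) = 0 then n else if (j : ℕ) = ℓ then 0 else k

/-- δ'_n = Σ_{k=0}^{n} W(μ_{n,k}): the dimension of the eigenspace of
eigenvalue n of the equivariant Dirac operator D_eq on L²(S_q^{2ℓ+1}). -/
noncomputable def deltaSph (ℓ n : ℕ) : ℝ :=
  ∑ k ∈ Finset.range (n + 1), weylDim ℓ (muTab ℓ n k)

lemma muTab_anti (ℓ n k : ℕ) (hk : k ≤ n) {i j : Fin (ℓ + 1)} (h : (i : ℕ) < (j : ℕ)) :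
    muTab ℓ n k j ≤ muTab ℓ n k i := by
  have hj := j.isLt
  simp only [muTab]
  split_ifs <;> omega

/-- The number of pairs (i,j), i < j, with i = 0 or j = ℓ, is 2ℓ - 1. -/
lemma card_Q (ℓ : ℕ) (hℓ : 1 ≤ ℓ) :
    ((Finset.univ.filter (fun p : Fin (ℓ + 1) × Fin (ℓ + 1) => p.1 < p.2)).filter
      (fun p => (p.1 : ℕ) = 0 ∨ (p.2 : ℕ) = ℓ)).card = 2 * ℓ - 1 := by
  rw [Finset.filter_filter]
  have h1 : (Finset.univ.filter
      (fun p : Fin (ℓ + 1) × Fin (ℓ + 1) => p.1 < p.2 ∧ ((p.1 : ℕ) = 0 ∨ (p.2 : ℕ) = ℓ)))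
      = ({(0 : Fin (ℓ + 1))} ×ˢ Finset.Ioi (0 : Fin (ℓ + 1))) ∪
        ((Finset.Ioo (0 : Fin (ℓ + 1)) (Fin.last ℓ)) ×ˢ {Fin.last ℓ}) := by
    ext ⟨a, b⟩
    have ha := a.isLt
    have hb := b.isLt
    simp only [Finset.mem_filter, Finset.mem_univ, true_and, Finset.mem_union,
      Finset.mem_product, Finset.mem_singleton, Finset.mem_Ioi, Finset.mem_Ioo,
      Fin.lt_def, Fin.ext_iff, Fin.val_last, Fin.val_zero]
    omega
  have hdisj : Disjoint ({(0 : Fin (ℓ + 1))} ×ˢ Finset.Ioi (0 : Fin (ℓ + 1)))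
      ((Finset.Ioo (0 : Fin (ℓ + 1)) (Fin.last ℓ)) ×ˢ {Fin.last ℓ}) := by
    rw [Finset.disjoint_left]
    rintro ⟨a, b⟩ h1 h2
    simp only [Finset.mem_product, Finset.mem_singleton, Finset.mem_Ioi,
      Finset.mem_Ioo] at h1 h2
    exact absurd h1.1 (by rw [Fin.ext_iff]; have := h2.1.1; simp only [Fin.lt_def, Fin.val_zero] at this ⊢; omega)
  rw [h1, Finset.card_union_of_disjoint hdisj, Finset.card_product, Finset.card_product,
    Finset.card_singleton, Finset.card_singleton, Fin.card_Ioi, Fin.card_Ioo]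
  simp [Fin.val_last]
  omega

lemma one_le_weylDim_s12 (ℓ n k : ℕ) (hk : k ≤ n) : 1 ≤ weylDim ℓ (muTab ℓ n k) := by
  unfold weylDim
  calc (1 : ℝ) = ∏ p ∈ Finset.univ.filter
        (fun p : Fin (ℓ + 1) × Fin (ℓ + 1) => p.1 < p.2), 1 := by
        rw [Finset.prod_const_one]
    _ ≤ _ := by
        refine Finset.prod_le_prod (fun p _ => zero_le_one) ?_
        intro p hp
        rw [Finset.mem_filter] at hp
        have hij : (p.1 : ℕ) < (p.2 : ℕ) := hp.2
        have hA : (muTab ℓ n k p.2 : ℝ) ≤ (muTab ℓ n k p.1 : ℝ) := by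
          exact_mod_cast muTab_anti ℓ n k hk hij
        have hd : ((p.1 : ℕ) : ℝ) + 1 ≤ ((p.2 : ℕ) : ℝ) := by exact_mod_cast hij
        rw [le_div_iff₀ (by linarith)]
        linarith

lemma weylDim_le_bound (ℓ n k : ℕ) (hℓ : 1 ≤ ℓ) (hn : 1 ≤ n) (hk : k ≤ n) :
    weylDim ℓ (muTab ℓ n k) ≤ (2 * (n : ℝ)) ^ (2 * ℓ - 1) := by
  unfold weylDim
  have hstep : ∀ p ∈ Finset.univ.filter
      (fun p : Fin (ℓ + 1) × Fin (ℓ + 1) => p.1 < p.2),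
      (((muTab ℓ n k p.1 : ℝ) - (muTab ℓ n k p.2 : ℝ) + ((p.2 : ℕ) : ℝ) - ((p.1 : ℕ) : ℝ)) /
        (((p.2 : ℕ) : ℝ) - ((p.1 : ℕ) : ℝ)))
      ≤ (if (p.1 : ℕ) = 0 ∨ (p.2 : ℕ) = ℓ then (2 * (n : ℝ)) else 1) := by
    intro p hp
    rw [Finset.mem_filter] at hp
    have hij : (p.1 : ℕ) < (p.2 : ℕ) := hp.2
    have hd : ((p.1 : ℕ) : ℝ) + 1 ≤ ((p.2 : ℕ) : ℝ) := by exact_mod_cast hij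
    by_cases hQ : (p.1 : ℕ) = 0 ∨ (p.2 : ℕ) = ℓ
    · rw [if_pos hQ]
      have hA : (muTab ℓ n k p.2 : ℝ) ≤ (muTab ℓ n k p.1 : ℝ) := by
        exact_mod_cast muTab_anti ℓ n k hk hij
      have hfi : muTab ℓ n k p.1 ≤ n := by simp only [muTab]; split_ifs <;> omega
      have hfi' : (muTab ℓ n k p.1 : ℝ) ≤ (n : ℝ) := by exact_mod_cast hfi
      have hfj : (0 : ℝ) ≤ (muTab ℓ n k p.2 : ℝ) := Nat.cast_nonneg _
      have hn' : (1 : ℝ) ≤ (n : ℝ) := by exact_mod_cast hn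
      rw [div_le_iff₀ (by linarith)]
      nlinarith [mul_le_mul_of_nonneg_left (show (1:ℝ) ≤ ((p.2 : ℕ) : ℝ) - ((p.1 : ℕ) : ℝ) by linarith) (show (0:ℝ) ≤ (n:ℝ) by linarith)]
    · rw [if_neg hQ]
      push_neg at hQ
      have h10 : (p.1 : ℕ) ≠ 0 := hQ.1
      have h2ℓ : (p.2 : ℕ) ≠ ℓ := hQ.2
      have hb := p.2.isLt
      have hfi : muTab ℓ n k p.1 = k := by
        simp only [muTab]; split_ifs <;> omega
      have hfj : muTab ℓ n k p.2 = k := by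
        simp only [muTab]; split_ifs <;> omega
      rw [hfi, hfj, sub_self, zero_add]
      rw [div_self (by linarith)]
  calc _ ≤ ∏ p ∈ Finset.univ.filter (fun p : Fin (ℓ + 1) × Fin (ℓ + 1) => p.1 < p.2),
        (if (p.1 : ℕ) = 0 ∨ (p.2 : ℕ) = ℓ then (2 * (n : ℝ)) else 1) := by
        refine Finset.prod_le_prod ?_ hstep
        intro p hp
        rw [Finset.mem_filter] at hp
        have hij : (p.1 : ℕ) < (p.2 : ℕ) := hp.2
        have hd : ((p.1 : ℕ) : ℝ) + 1 ≤ ((p.2 : ℕ) : ℝ) := by exact_mod_cast hij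
        have hA : (muTab ℓ n k p.2 : ℝ) ≤ (muTab ℓ n k p.1 : ℝ) := by
          exact_mod_cast muTab_anti ℓ n k hk hij
        apply div_nonneg <;> linarith
    _ = (2 * (n : ℝ)) ^ (2 * ℓ - 1) := by
        rw [Finset.prod_ite, Finset.prod_const, Finset.prod_const, one_pow, mul_one, card_Q ℓ hℓ]

lemma le_weylDim_mid (ℓ n k : ℕ) (hℓ : 1 ≤ ℓ) (hn : 6 ≤ n) (hk1 : n / 4 ≤ k)
    (hk2 : k ≤ n / 2) :
    ((n : ℝ) / (8 * ℓ)) ^ (2 * ℓ - 1) ≤ weylDim ℓ (muTab ℓ n k) := by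
  have hl0 : (0 : ℝ) < (ℓ : ℝ) := by exact_mod_cast hℓ
  have hc0 : (0 : ℝ) ≤ (n : ℝ) / (8 * ℓ) := by positivity
  have hkn : k ≤ n := by omega
  unfold weylDim
  have hstep : ∀ p ∈ Finset.univ.filter
      (fun p : Fin (ℓ + 1) × Fin (ℓ + 1) => p.1 < p.2),
      (if (p.1 : ℕ) = 0 ∨ (p.2 : ℕ) = ℓ then ((n : ℝ) / (8 * ℓ)) else 1)
      ≤ (((muTab ℓ n k p.1 : ℝ) - (muTab ℓ n k p.2 : ℝ) + ((p.2 : ℕ) : ℝ) - ((p.1 : ℕ) : ℝ)) /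
        (((p.2 : ℕ) : ℝ) - ((p.1 : ℕ) : ℝ))) := by
    intro p hp
    rw [Finset.mem_filter] at hp
    have hij : (p.1 : ℕ) < (p.2 : ℕ) := hp.2
    have hd : ((p.1 : ℕ) : ℝ) + 1 ≤ ((p.2 : ℕ) : ℝ) := by exact_mod_cast hij
    have hb : (p.2 : ℕ) ≤ ℓ := Nat.lt_succ_iff.mp p.2.isLt
    have hdl : ((p.2 : ℕ) : ℝ) - ((p.1 : ℕ) : ℝ) ≤ (ℓ : ℝ) := by
      have h1 : ((p.2 : ℕ) : ℝ) ≤ (ℓ : ℝ) := by exact_mod_cast hb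
      have h2 : (0 : ℝ) ≤ ((p.1 : ℕ) : ℝ) := Nat.cast_nonneg _
      linarith
    by_cases hQ : (p.1 : ℕ) = 0 ∨ (p.2 : ℕ) = ℓ
    · rw [if_pos hQ]
      -- show A := fi - fj ≥ n/8
      have hA : (n : ℝ) / 8 ≤ (muTab ℓ n k p.1 : ℝ) - (muTab ℓ n k p.2 : ℝ) := by
        by_cases h0 : (p.1 : ℕ) = 0
        · have hfi : muTab ℓ n k p.1 = n := by simp only [muTab, if_pos h0]
          have hfj : muTab ℓ n k p.2 ≤ k := by
            simp only [muTab]; split_ifs <;> omega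
          have h2k : 2 * k ≤ n := by omega
          have h2k' : 2 * (k : ℝ) ≤ (n : ℝ) := by exact_mod_cast h2k
          have hfj' : (muTab ℓ n k p.2 : ℝ) ≤ (k : ℝ) := by exact_mod_cast hfj
          rw [hfi]
          linarith
        · have h2 : (p.2 : ℕ) = ℓ := hQ.resolve_left h0
          have hfi : muTab ℓ n k p.1 = k := by
            simp only [muTab]; split_ifs <;> omega
          have hfj : muTab ℓ n k p.2 = 0 := by
            simp only [muTab]; split_ifs <;> omega
          have h8k : n ≤ 8 * k := by omega
          have h8k' : (n : ℝ) ≤ 8 * (k : ℝ) := by exact_mod_cast h8k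
          rw [hfi, hfj]
          push_cast
          linarith
      rw [le_div_iff₀ (by linarith)]
      have hmul : (n : ℝ) / (8 * ℓ) * (((p.2 : ℕ) : ℝ) - ((p.1 : ℕ) : ℝ))
          ≤ (n : ℝ) / (8 * ℓ) * (ℓ : ℝ) := by
        exact mul_le_mul_of_nonneg_left hdl hc0
      have heq : (n : ℝ) / (8 * ℓ) * (ℓ : ℝ) = (n : ℝ) / 8 := by
        field_simp
      linarith
    · rw [if_neg hQ]
      have hA : (muTab ℓ n k p.2 : ℝ) ≤ (muTab ℓ n k p.1 : ℝ) := by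
        exact_mod_cast muTab_anti ℓ n k hkn hij
      rw [le_div_iff₀ (by linarith)]
      linarith
  calc ((n : ℝ) / (8 * ℓ)) ^ (2 * ℓ - 1)
      = ∏ p ∈ Finset.univ.filter (fun p : Fin (ℓ + 1) × Fin (ℓ + 1) => p.1 < p.2),
        (if (p.1 : ℕ) = 0 ∨ (p.2 : ℕ) = ℓ then ((n : ℝ) / (8 * ℓ)) else 1) := by
        rw [Finset.prod_ite, Finset.prod_const, Finset.prod_const, one_pow, mul_one,
          card_Q ℓ hℓ]
    _ ≤ _ := by
        refine Finset.prod_le_prod ?_ hstep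
        intro p _
        split_ifs
        · exact hc0
        · exact zero_le_one

/-- δ'_n grows exactly like n^{2ℓ}. -/
theorem stmt_12 (ℓ : ℕ) (hℓ : 1 ≤ ℓ) :
    ∃ c₁ c₂ : ℝ, 0 < c₁ ∧ 0 < c₂ ∧ ∀ n : ℕ, 1 ≤ n →
      c₁ * (n : ℝ) ^ (2 * ℓ) ≤ deltaSph ℓ n ∧
      deltaSph ℓ n ≤ c₂ * (n : ℝ) ^ (2 * ℓ) := by
  have hl0 : (0 : ℝ) < (ℓ : ℝ) := by exact_mod_cast hℓ
  have hm : 2 * ℓ - 1 + 1 = 2 * ℓ := by omega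
  set m := 2 * ℓ - 1 with hmdef
  have hbase : (0 : ℝ) < 4 * (8 * (ℓ : ℝ)) ^ m := by
    apply mul_pos (by norm_num)
    exact pow_pos (by linarith) _
  refine ⟨min (1 / (4 * (8 * (ℓ : ℝ)) ^ m)) (1 / (6 : ℝ) ^ (2 * ℓ)), 2 ^ (2 * ℓ), ?_, by positivity, ?_⟩
  · apply lt_min
    · exact div_pos one_pos hbase
    · positivity
  intro n hn
  have hn' : (1 : ℝ) ≤ (n : ℝ) := by exact_mod_cast hn
  constructor
  · -- lower bound
    rcases le_or_gt 6 n with h6 | h6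
    · -- main case
      set M := Finset.Icc (n / 4) (n / 2) with hM
      have hsub : M ⊆ Finset.range (n + 1) := by
        intro k hk
        rw [Finset.mem_Icc] at hk
        rw [Finset.mem_range]
        omega
      have hsum1 : ∑ k ∈ M, weylDim ℓ (muTab ℓ n k) ≤ deltaSph ℓ n := by
        unfold deltaSph
        refine Finset.sum_le_sum_of_subset_of_nonneg hsub ?_
        intro k hk _
        rw [Finset.mem_range] at hk
        exact le_trans zero_le_one (one_le_weylDim_s12 ℓ n k (by omega))
      have hsum2 : ∑ k ∈ M, ((n : ℝ) / (8 * ℓ)) ^ m ≤ ∑ k ∈ M, weylDim ℓ (muTab ℓ n k) := by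
        refine Finset.sum_le_sum ?_
        intro k hk
        rw [Finset.mem_Icc] at hk
        exact le_weylDim_mid ℓ n k hℓ h6 hk.1 hk.2
      have hcardM : (n : ℝ) / 4 ≤ (M.card : ℝ) := by
        have hc : M.card = n / 2 + 1 - n / 4 := Nat.card_Icc _ _
        have h4 : n ≤ 4 * M.card := by rw [hc]; omega
        have h4' : (n : ℝ) ≤ 4 * (M.card : ℝ) := by exact_mod_cast h4
        linarith
      have hconst : ∑ k ∈ M, ((n : ℝ) / (8 * ℓ)) ^ m = (M.card : ℝ) * ((n : ℝ) / (8 * ℓ)) ^ m := by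
        rw [Finset.sum_const, nsmul_eq_mul]
      have hcpow : (0 : ℝ) ≤ ((n : ℝ) / (8 * ℓ)) ^ m := by positivity
      have hkey : (1 / (4 * (8 * (ℓ : ℝ)) ^ m)) * (n : ℝ) ^ (2 * ℓ)
          ≤ (M.card : ℝ) * ((n : ℝ) / (8 * ℓ)) ^ m := by
        have heq : (1 / (4 * (8 * (ℓ : ℝ)) ^ m)) * (n : ℝ) ^ (2 * ℓ)
            = ((n : ℝ) / 4) * ((n : ℝ) / (8 * ℓ)) ^ m := by
          rw [div_pow, ← hm, pow_succ]
          field_simp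
        rw [heq]
        exact mul_le_mul_of_nonneg_right hcardM hcpow
      have hmin : min (1 / (4 * (8 * (ℓ : ℝ)) ^ m)) (1 / (6 : ℝ) ^ (2 * ℓ)) * (n : ℝ) ^ (2 * ℓ)
          ≤ (1 / (4 * (8 * (ℓ : ℝ)) ^ m)) * (n : ℝ) ^ (2 * ℓ) := by
        exact mul_le_mul_of_nonneg_right (min_le_left _ _) (by positivity)
      linarith
    · -- small n
      have h1 : (1 : ℝ) ≤ deltaSph ℓ n := by
        unfold deltaSph
        calc (1 : ℝ) ≤ weylDim ℓ (muTab ℓ n 0) := one_le_weylDim_s12 ℓ n 0 (Nat.zero_le _)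
          _ ≤ _ := by
            refine Finset.single_le_sum (f := fun k => weylDim ℓ (muTab ℓ n k)) ?_ (Finset.mem_range.mpr (Nat.succ_pos n))
            intro k hk
            rw [Finset.mem_range] at hk
            exact le_trans zero_le_one (one_le_weylDim_s12 ℓ n k (by omega))
      have hminr : min (1 / (4 * (8 * (ℓ : ℝ)) ^ m)) (1 / (6 : ℝ) ^ (2 * ℓ))
          ≤ 1 / (6 : ℝ) ^ (2 * ℓ) := min_le_right _ _
      have hpow : (n : ℝ) ^ (2 * ℓ) ≤ (6 : ℝ) ^ (2 * ℓ) := by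
        apply pow_le_pow_left₀ (by positivity)
        exact_mod_cast Nat.le_of_lt h6
      have h60 : (0 : ℝ) < (6 : ℝ) ^ (2 * ℓ) := by positivity
      calc min (1 / (4 * (8 * (ℓ : ℝ)) ^ m)) (1 / (6 : ℝ) ^ (2 * ℓ)) * (n : ℝ) ^ (2 * ℓ)
          ≤ (1 / (6 : ℝ) ^ (2 * ℓ)) * (6 : ℝ) ^ (2 * ℓ) := by
            apply mul_le_mul hminr hpow (by positivity) (by positivity)
        _ = 1 := by field_simp
        _ ≤ deltaSph ℓ n := h1
  · -- upper bound
    have hsum : deltaSph ℓ n ≤ ∑ _k ∈ Finset.range (n + 1), (2 * (n : ℝ)) ^ m := by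
      unfold deltaSph
      refine Finset.sum_le_sum ?_
      intro k hk
      rw [Finset.mem_range] at hk
      exact weylDim_le_bound ℓ n k hℓ hn (by omega)
    have hconst : ∑ _k ∈ Finset.range (n + 1), (2 * (n : ℝ)) ^ m
        = ((n : ℝ) + 1) * (2 * (n : ℝ)) ^ m := by
      rw [Finset.sum_const, Finset.card_range, nsmul_eq_mul]
      push_cast
      ring
    have hlast : ((n : ℝ) + 1) * (2 * (n : ℝ)) ^ m ≤ 2 ^ (2 * ℓ) * (n : ℝ) ^ (2 * ℓ) := by
      have h2 : (0 : ℝ) ≤ (2 * (n : ℝ)) ^ m := by positivity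
      calc ((n : ℝ) + 1) * (2 * (n : ℝ)) ^ m ≤ (2 * (n : ℝ)) * (2 * (n : ℝ)) ^ m := by
            apply mul_le_mul_of_nonneg_right (by linarith) h2
        _ = (2 * (n : ℝ)) ^ (2 * ℓ) := by rw [← pow_succ', hm]
        _ = 2 ^ (2 * ℓ) * (n : ℝ) ^ (2 * ℓ) := by rw [mul_pow]
    linarith
end

section
/- Let ℓ ≥ 1 and, for n ∈ ℕ, define δ'_n := Σ_{k=0}^{n} W(μ_{n,k}), where μ_{n,k} : {0, 1, …, ℓ} → ℕ is the weakly decreasing function with μ_{n,k}(0) = n, μ_{n,k}(j) = k for 1 ≤ j ≤ ℓ−1, μ_{n,k}(ℓ) = 0, and W(μ) := ∏_{0 ≤ i < j ≤ ℓ} (μ(i) − μ(j) + j − i)/(j − i). Then for a real number p > 0, the series Σ_{n ≥ 1} δ'_n·n^{−p} converges if and only if p > 2ℓ + 1. -/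
namespace Stmt13

def gfun (L n k a : ℕ) : ℕ := if a = 0 then n else if a = L then 0 else k

noncomputable def Ffun (L n k a b : ℕ) : ℝ :=
  if a < b then ((gfun L n k a : ℝ) - (gfun L n k b : ℝ) + (b : ℝ) - (a : ℝ)) / ((b:ℝ) - (a:ℝ)) else 1

lemma weylDim_eq (L n k : ℕ) :
    weylDim L (muTab L n k)
      = ∏ a ∈ Finset.range (L+1), ∏ b ∈ Finset.range (L+1), Ffun L n k a b := by
  unfold weylDim
  rw [← Finset.univ_product_univ, Finset.prod_filter, Finset.prod_product]
  rw [← Fin.prod_univ_eq_prod_range (fun a => ∏ b ∈ Finset.range (L+1), Ffun L n k a b) (L+1)]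
  refine Finset.prod_congr rfl fun i _ => ?_
  rw [← Fin.prod_univ_eq_prod_range (fun b => Ffun L n k (i:ℕ) b) (L+1)]
  refine Finset.prod_congr rfl fun j _ => ?_
  unfold Ffun muTab gfun
  simp only [Fin.lt_def]

lemma Ffun_0_top (m n k : ℕ) : Ffun (m+1) n k 0 (m+1) = ((n:ℝ) + (m+1)) / ((m:ℝ)+1) := by
  unfold Ffun gfun
  rw [if_pos (Nat.succ_pos m), if_pos rfl, if_neg (Nat.succ_ne_zero m), if_pos rfl]
  push_cast
  ring_nf

lemma Ffun_0_mid (m n k j : ℕ) (hj : j < m) :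
    Ffun (m+1) n k 0 (j+1) = ((n:ℝ) - (k:ℝ) + ((j:ℝ)+1)) / ((j:ℝ)+1) := by
  unfold Ffun gfun
  rw [if_pos (Nat.succ_pos j), if_pos rfl, if_neg (Nat.succ_ne_zero j),
    if_neg (by omega : j + 1 ≠ m + 1)]
  push_cast
  ring_nf

lemma Ffun_mid_top (m n k a : ℕ) (ha : a < m) :
    Ffun (m+1) n k (a+1) (m+1) = ((k:ℝ) + ((m:ℝ) - (a:ℝ))) / ((m:ℝ) - (a:ℝ)) := by
  unfold Ffun gfun
  rw [if_pos (by omega : a + 1 < m + 1), if_neg (Nat.succ_ne_zero a),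
    if_neg (by omega : a + 1 ≠ m + 1), if_neg (Nat.succ_ne_zero m), if_pos rfl]
  push_cast
  ring_nf

lemma Ffun_one (m n k a b : ℕ) (ha : 1 ≤ a) (hb : b ≤ m) : Ffun (m+1) n k a b = 1 := by
  unfold Ffun gfun
  by_cases h : a < b
  · rw [if_pos h, if_neg (by omega : a ≠ 0), if_neg (by omega : a ≠ m + 1),
      if_neg (by omega : b ≠ 0), if_neg (by omega : b ≠ m + 1)]
    rw [sub_self, zero_add]
    refine div_self ?_
    have : (a:ℝ) < b := by exact_mod_cast h
    linarith
  · rw [if_neg h]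

lemma Ffun_diag (L n k a : ℕ) : Ffun L n k a a = 1 := by
  unfold Ffun; rw [if_neg (lt_irrefl a)]

lemma prod_F_eq (m n k : ℕ) :
    (∏ a ∈ Finset.range (m+2), ∏ b ∈ Finset.range (m+2), Ffun (m+1) n k a b)
    = (((n:ℝ) + (m+1)) / ((m:ℝ)+1))
      * (∏ j ∈ Finset.range m, (((n:ℝ) - (k:ℝ) + ((j:ℝ)+1)) / ((j:ℝ)+1)))
      * (∏ i ∈ Finset.range m, (((k:ℝ) + ((m:ℝ) - (i:ℝ))) / ((m:ℝ) - (i:ℝ)))) := by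
  rw [Finset.prod_range_succ']
  have hC0 : (∏ b ∈ Finset.range (m+2), Ffun (m+1) n k 0 b)
      = (∏ j ∈ Finset.range m, (((n:ℝ) - (k:ℝ) + ((j:ℝ)+1)) / ((j:ℝ)+1)))
        * (((n:ℝ) + (m+1)) / ((m:ℝ)+1)) := by
    rw [Finset.prod_range_succ, Ffun_0_top, Finset.prod_range_succ', Ffun_diag, mul_one]
    congr 1
    refine Finset.prod_congr rfl fun j hj => ?_
    exact Ffun_0_mid m n k j (Finset.mem_range.mp hj)
  have hCa : (∏ a ∈ Finset.range (m+1), ∏ b ∈ Finset.range (m+2), Ffun (m+1) n k (a+1) b)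
      = ∏ i ∈ Finset.range m, (((k:ℝ) + ((m:ℝ) - (i:ℝ))) / ((m:ℝ) - (i:ℝ))) := by
    have h1 : ∀ a ∈ Finset.range (m+1),
        (∏ b ∈ Finset.range (m+2), Ffun (m+1) n k (a+1) b) = Ffun (m+1) n k (a+1) (m+1) := by
      intro a _
      refine Finset.prod_eq_single (m+1) (fun b hb hbne => ?_) (fun h => absurd (Finset.mem_range.mpr (by omega)) h)
      exact Ffun_one m n k (a+1) b (by omega) (by have := Finset.mem_range.mp hb; omega)
    rw [Finset.prod_congr rfl h1, Finset.prod_range_succ, Ffun_diag, mul_one]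
    refine Finset.prod_congr rfl fun a ha => ?_
    exact Ffun_mid_top m n k a (Finset.mem_range.mp ha)
  rw [hC0, hCa]
  ring

lemma weylDim_muTab (m n k : ℕ) :
    weylDim (m+1) (muTab (m+1) n k)
    = (((n:ℝ) + (m+1)) / ((m:ℝ)+1))
      * (∏ j ∈ Finset.range m, (((n:ℝ) - (k:ℝ) + ((j:ℝ)+1)) / ((j:ℝ)+1)))
      * (∏ i ∈ Finset.range m, (((k:ℝ) + ((m:ℝ) - (i:ℝ))) / ((m:ℝ) - (i:ℝ)))) := by
  rw [weylDim_eq, prod_F_eq]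


lemma weylDim_le (m n k : ℕ) (hk : k ≤ n) (hn : 1 ≤ n) :
    weylDim (m+1) (muTab (m+1) n k) ≤ (2*(n:ℝ))^(2*m+1) := by
  have hn' : (1:ℝ) ≤ (n:ℝ) := by exact_mod_cast hn
  have hk' : (k:ℝ) ≤ (n:ℝ) := by exact_mod_cast hk
  rw [weylDim_muTab]
  have hA : (((n:ℝ) + (m+1)) / ((m:ℝ)+1)) ≤ 2*(n:ℝ) := by
    rw [div_le_iff₀ (by positivity)]
    nlinarith [Nat.cast_nonneg (α := ℝ) m]
  have hB : (∏ j ∈ Finset.range m, (((n:ℝ) - (k:ℝ) + ((j:ℝ)+1)) / ((j:ℝ)+1))) ≤ (2*(n:ℝ))^m := by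
    calc _ ≤ ∏ _j ∈ Finset.range m, (2*(n:ℝ)) := by
            refine Finset.prod_le_prod (fun j _ => div_nonneg (by linarith) (by positivity)) (fun j _ => ?_)
            rw [div_le_iff₀ (by positivity)]
            nlinarith [Nat.cast_nonneg (α := ℝ) j]
      _ = (2*(n:ℝ))^m := by rw [Finset.prod_const, Finset.card_range]
  have hC : (∏ i ∈ Finset.range m, (((k:ℝ) + ((m:ℝ) - (i:ℝ))) / ((m:ℝ) - (i:ℝ)))) ≤ (2*(n:ℝ))^m := by
    calc _ ≤ ∏ _i ∈ Finset.range m, (2*(n:ℝ)) := by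
            refine Finset.prod_le_prod (fun i hi => ?_) (fun i hi => ?_)
            · have hi' : (i:ℝ) + 1 ≤ (m:ℝ) := by exact_mod_cast Finset.mem_range.mp hi
              have : (0:ℝ) < (m:ℝ) - i := by linarith
              positivity
            · have hi' : (i:ℝ) + 1 ≤ (m:ℝ) := by exact_mod_cast Finset.mem_range.mp hi
              rw [div_le_iff₀ (by linarith)]
              nlinarith [Nat.cast_nonneg (α := ℝ) k]
      _ = (2*(n:ℝ))^m := by rw [Finset.prod_const, Finset.card_range]
  calc _ ≤ (2*(n:ℝ)) * (2*(n:ℝ))^m * (2*(n:ℝ))^m := by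
        have h0A : (0:ℝ) ≤ ((n:ℝ) + (m+1)) / ((m:ℝ)+1) := by positivity
        have h0B : (0:ℝ) ≤ ∏ j ∈ Finset.range m, (((n:ℝ) - (k:ℝ) + ((j:ℝ)+1)) / ((j:ℝ)+1)) :=
          Finset.prod_nonneg (fun j _ => div_nonneg (by linarith) (by positivity))
        have h0C : (0:ℝ) ≤ ∏ i ∈ Finset.range m, (((k:ℝ) + ((m:ℝ) - (i:ℝ))) / ((m:ℝ) - (i:ℝ))) := by
          refine Finset.prod_nonneg (fun i hi => ?_)
          have hi' : (i:ℝ) + 1 ≤ (m:ℝ) := by exact_mod_cast Finset.mem_range.mp hi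
          have : (0:ℝ) < (m:ℝ) - i := by linarith
          positivity
        have h2n : (0:ℝ) ≤ 2*(n:ℝ) := by positivity
        exact mul_le_mul (mul_le_mul hA hB h0B h2n) hC h0C (by positivity)
    _ = (2*(n:ℝ))^(2*m+1) := by rw [← pow_succ']; rw [← pow_add]; ring_nf
lemma weylDim_ge (m n k : ℕ) (h1 : n ≤ 3*k) (h2 : 2*k ≤ n) :
    ((n:ℝ)/(3*((m:ℝ)+1)))^(2*m+1) ≤ weylDim (m+1) (muTab (m+1) n k) := by
  have h1' : (n:ℝ) ≤ 3*(k:ℝ) := by exact_mod_cast h1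
  have h2' : 2*(k:ℝ) ≤ (n:ℝ) := by exact_mod_cast h2
  have hm : (0:ℝ) ≤ (m:ℝ) := Nat.cast_nonneg m
  set c : ℝ := (n:ℝ)/(3*((m:ℝ)+1)) with hc
  have hc0 : 0 ≤ c := by positivity
  rw [weylDim_muTab]
  have hA : c ≤ ((n:ℝ) + (m+1)) / ((m:ℝ)+1) := by
    rw [hc, div_le_div_iff₀ (by positivity) (by positivity)]
    nlinarith [Nat.cast_nonneg (α := ℝ) n]
  have hB : c^m ≤ ∏ j ∈ Finset.range m, (((n:ℝ) - (k:ℝ) + ((j:ℝ)+1)) / ((j:ℝ)+1)) := by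
    calc c^m = ∏ _j ∈ Finset.range m, c := by rw [Finset.prod_const, Finset.card_range]
      _ ≤ _ := by
        refine Finset.prod_le_prod (fun _ _ => hc0) (fun j hj => ?_)
        have hj' : (j:ℝ) + 1 ≤ (m:ℝ) := by exact_mod_cast Finset.mem_range.mp hj
        rw [hc, div_le_div_iff₀ (by positivity) (by positivity)]
        nlinarith [Nat.cast_nonneg (α := ℝ) j, Nat.cast_nonneg (α := ℝ) n]
  have hC : c^m ≤ ∏ i ∈ Finset.range m, (((k:ℝ) + ((m:ℝ) - (i:ℝ))) / ((m:ℝ) - (i:ℝ))) := by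
    calc c^m = ∏ _i ∈ Finset.range m, c := by rw [Finset.prod_const, Finset.card_range]
      _ ≤ _ := by
        refine Finset.prod_le_prod (fun _ _ => hc0) (fun i hi => ?_)
        have hi' : (i:ℝ) + 1 ≤ (m:ℝ) := by exact_mod_cast Finset.mem_range.mp hi
        rw [hc, div_le_div_iff₀ (by positivity) (by linarith)]
        nlinarith [Nat.cast_nonneg (α := ℝ) i, Nat.cast_nonneg (α := ℝ) k]
  calc c^(2*m+1) = c * c^m * c^m := by rw [← pow_succ']; rw [← pow_add]; ring_nf
    _ ≤ _ := by
      refine mul_le_mul (mul_le_mul hA hB (by positivity) ?_) hC (by positivity) ?_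
      · have := hA; positivity
      · have hAB : 0 ≤ ((n:ℝ) + (m+1)) / ((m:ℝ)+1) := by positivity
        have hB0 : (0:ℝ) ≤ ∏ j ∈ Finset.range m, (((n:ℝ) - (k:ℝ) + ((j:ℝ)+1)) / ((j:ℝ)+1)) :=
          le_trans (by positivity) hB
        positivity

lemma weylDim_nonneg (m n k : ℕ) (hk : k ≤ n) :
    0 ≤ weylDim (m+1) (muTab (m+1) n k) := by
  have hk' : (k:ℝ) ≤ (n:ℝ) := by exact_mod_cast hk
  rw [weylDim_muTab]
  have h0B : (0:ℝ) ≤ ∏ j ∈ Finset.range m, (((n:ℝ) - (k:ℝ) + ((j:ℝ)+1)) / ((j:ℝ)+1)) :=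
    Finset.prod_nonneg (fun j _ => div_nonneg (by linarith) (by positivity))
  have h0C : (0:ℝ) ≤ ∏ i ∈ Finset.range m, (((k:ℝ) + ((m:ℝ) - (i:ℝ))) / ((m:ℝ) - (i:ℝ))) := by
    refine Finset.prod_nonneg (fun i hi => ?_)
    have hi' : (i:ℝ) + 1 ≤ (m:ℝ) := by exact_mod_cast Finset.mem_range.mp hi
    have : (0:ℝ) < (m:ℝ) - i := by linarith
    positivity
  exact mul_nonneg (mul_nonneg (by positivity) h0B) h0C


lemma deltaSph_nonneg (m n : ℕ) : 0 ≤ deltaSph (m+1) n :=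
  Finset.sum_nonneg fun k hk =>
    weylDim_nonneg m n k (by have := Finset.mem_range.mp hk; omega)

lemma deltaSph_le (m n : ℕ) (hn : 1 ≤ n) :
    deltaSph (m+1) n ≤ 2^(2*m+2) * (n:ℝ)^(2*m+2) := by
  have hn' : (1:ℝ) ≤ (n:ℝ) := by exact_mod_cast hn
  unfold deltaSph
  calc (∑ k ∈ Finset.range (n + 1), weylDim (m+1) (muTab (m+1) n k))
      ≤ ∑ _k ∈ Finset.range (n + 1), (2*(n:ℝ))^(2*m+1) :=
        Finset.sum_le_sum fun k hk =>
          weylDim_le m n k (by have := Finset.mem_range.mp hk; omega) hn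
    _ = ((n:ℝ)+1) * (2*(n:ℝ))^(2*m+1) := by
        rw [Finset.sum_const, Finset.card_range, nsmul_eq_mul]; push_cast; ring
    _ ≤ (2*(n:ℝ)) * (2*(n:ℝ))^(2*m+1) := by
        refine mul_le_mul_of_nonneg_right (by linarith) (by positivity)
    _ = 2^(2*m+2) * (n:ℝ)^(2*m+2) := by
        rw [← pow_succ']
        rw [mul_pow]

lemma deltaSph_ge (m n : ℕ) (hn : 2 ≤ n) :
    (1/12) * (1/(3*((m:ℝ)+1)))^(2*m+1) * (n:ℝ)^(2*m+2) ≤ deltaSph (m+1) n := by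
  set a := (n+2)/3 with ha
  set b := n/2 with hb
  have hsub : Finset.Icc a b ⊆ Finset.range (n+1) := by
    intro k hk
    have := Finset.mem_Icc.mp hk
    exact Finset.mem_range.mpr (by omega)
  have hcard : (n:ℝ)/12 ≤ ((Finset.Icc a b).card : ℝ) := by
    rw [Nat.card_Icc]
    rw [div_le_iff₀ (by norm_num : (0:ℝ) < 12)]
    have hnat : n ≤ (b + 1 - a) * 12 := by omega
    exact_mod_cast hnat
  have hterm : ∀ k ∈ Finset.Icc a b,
      ((n:ℝ)/(3*((m:ℝ)+1)))^(2*m+1) ≤ weylDim (m+1) (muTab (m+1) n k) := by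
    intro k hk
    have h := Finset.mem_Icc.mp hk
    exact weylDim_ge m n k (by omega) (by omega)
  have hcpos : (0:ℝ) ≤ ((n:ℝ)/(3*((m:ℝ)+1)))^(2*m+1) := by positivity
  calc (1/12) * (1/(3*((m:ℝ)+1)))^(2*m+1) * (n:ℝ)^(2*m+2)
      = ((n:ℝ)/12) * ((n:ℝ)/(3*((m:ℝ)+1)))^(2*m+1) := by
        rw [div_pow, div_pow, one_pow, pow_succ ((n:ℝ)) (2*m+1)]
        ring
    _ ≤ ((Finset.Icc a b).card : ℝ) * ((n:ℝ)/(3*((m:ℝ)+1)))^(2*m+1) :=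
        mul_le_mul_of_nonneg_right hcard hcpos
    _ = ∑ _k ∈ Finset.Icc a b, ((n:ℝ)/(3*((m:ℝ)+1)))^(2*m+1) := by
        rw [Finset.sum_const, nsmul_eq_mul]
    _ ≤ ∑ k ∈ Finset.Icc a b, weylDim (m+1) (muTab (m+1) n k) :=
        Finset.sum_le_sum hterm
    _ ≤ deltaSph (m+1) n := by
        unfold deltaSph
        refine Finset.sum_le_sum_of_subset_of_nonneg hsub (fun k hk _ => ?_)
        exact weylDim_nonneg m n k (by have := Finset.mem_range.mp hk; omega)

end Stmt13

open Stmt13 in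
/-- Σ_{n ≥ 1} δ'_n n^{−p} converges iff p > 2ℓ + 1, i.e. the
equivariant Dirac operator D_eq on L²(S_q^{2ℓ+1}) is p-summable iff
p > 2ℓ + 1, so the spectral dimension of S_q^{2ℓ+1} equals 2ℓ + 1. -/
theorem stmt_13 (ℓ : ℕ) (hℓ : 1 ≤ ℓ) (p : ℝ) (hp : 0 < p) :
    Summable (fun n : ℕ => deltaSph ℓ (n + 1) * ((n + 1 : ℕ) : ℝ) ^ (-p)) ↔
      (2 * ℓ + 1 : ℝ) < p := by
  obtain ⟨m, rfl⟩ : ∃ m, ℓ = m + 1 := ⟨ℓ - 1, by omega⟩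
  have hC : (0:ℝ) < (1/12) * (1/(3*((m:ℝ)+1)))^(2*m+1) := by positivity
  constructor
  · intro h
    have h1 : Summable (fun i : ℕ => deltaSph (m+1) (i+2) * ((i+2 : ℕ) : ℝ) ^ (-p)) := by
      have h0 :=
        (summable_nat_add_iff
          (f := fun n : ℕ => deltaSph (m+1) (n+1) * ((n+1 : ℕ) : ℝ) ^ (-p)) 1).mpr h
      simpa [add_assoc] using h0
    have h2 : Summable (fun i : ℕ =>
        ((1/12) * (1/(3*((m:ℝ)+1)))^(2*m+1)) * ((i+2 : ℕ) : ℝ) ^ ((2*(m:ℝ)+2) - p)) := by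
      refine Summable.of_nonneg_of_le (fun i => ?_) (fun i => ?_) h1
      · have hx : (0:ℝ) < ((i+2:ℕ):ℝ) := by positivity
        exact mul_nonneg hC.le (Real.rpow_nonneg hx.le _)
      · have hx : (0:ℝ) < ((i+2:ℕ):ℝ) := by positivity
        have key : ((i+2:ℕ):ℝ)^(2*m+2 : ℕ) * ((i+2:ℕ):ℝ)^(-p)
            = ((i+2:ℕ):ℝ)^((2*(m:ℝ)+2) - p) := by
          rw [← Real.rpow_natCast ((i+2:ℕ):ℝ) (2*m+2), ← Real.rpow_add hx]
          congr 1
          push_cast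
          ring
        have hge := deltaSph_ge m (i+2) (by omega)
        have hxr : (0:ℝ) ≤ ((i+2:ℕ):ℝ)^(-p) := Real.rpow_nonneg hx.le _
        calc ((1/12) * (1/(3*((m:ℝ)+1)))^(2*m+1)) * ((i+2 : ℕ) : ℝ) ^ ((2*(m:ℝ)+2) - p)
            = ((1/12) * (1/(3*((m:ℝ)+1)))^(2*m+1) * ((i+2:ℕ):ℝ)^(2*m+2 : ℕ)) * ((i+2:ℕ):ℝ)^(-p) := by
              rw [← key]; ring
          _ ≤ deltaSph (m+1) (i+2) * ((i+2 : ℕ) : ℝ) ^ (-p) :=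
              mul_le_mul_of_nonneg_right hge hxr
    have h3 : Summable (fun i : ℕ => ((i+2 : ℕ) : ℝ) ^ ((2*(m:ℝ)+2) - p)) :=
      (summable_mul_left_iff hC.ne').mp h2
    have h4 : Summable (fun i : ℕ => ((i : ℕ) : ℝ) ^ ((2*(m:ℝ)+2) - p)) :=
      (summable_nat_add_iff
        (f := fun i : ℕ => ((i : ℕ) : ℝ) ^ ((2*(m:ℝ)+2) - p)) 2).mp h3
    have h5 := Real.summable_nat_rpow.mp h4
    push_cast
    linarith
  · intro hgt
    have hr : (2*(m:ℝ)+2) - p < -1 := by push_cast at hgt; linarith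
    have hs : Summable (fun i : ℕ => ((i:ℕ):ℝ)^((2*(m:ℝ)+2) - p)) :=
      Real.summable_nat_rpow.mpr hr
    have hs1 : Summable (fun i : ℕ => ((i+1:ℕ):ℝ)^((2*(m:ℝ)+2) - p)) :=
      (summable_nat_add_iff
        (f := fun i : ℕ => ((i:ℕ):ℝ)^((2*(m:ℝ)+2) - p)) 1).mpr hs
    have hs2 := hs1.mul_left ((2:ℝ)^(2*m+2))
    refine Summable.of_nonneg_of_le (fun i => ?_) (fun i => ?_) hs2
    · exact mul_nonneg (deltaSph_nonneg m _) (Real.rpow_nonneg (by positivity) _)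
    · have hx : (0:ℝ) < ((i+1:ℕ):ℝ) := by positivity
      have key : ((i+1:ℕ):ℝ)^(2*m+2 : ℕ) * ((i+1:ℕ):ℝ)^(-p)
          = ((i+1:ℕ):ℝ)^((2*(m:ℝ)+2) - p) := by
        rw [← Real.rpow_natCast ((i+1:ℕ):ℝ) (2*m+2), ← Real.rpow_add hx]
        congr 1
        push_cast
        ring
      calc deltaSph (m+1) (i+1) * ((i+1:ℕ):ℝ)^(-p)
          ≤ (2^(2*m+2) * ((i+1:ℕ):ℝ)^(2*m+2 : ℕ)) * ((i+1:ℕ):ℝ)^(-p) :=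
            mul_le_mul_of_nonneg_right (deltaSph_le m (i+1) (by omega))
              (Real.rpow_nonneg hx.le _)
        _ = (2:ℝ)^(2*m+2) * ((i+1:ℕ):ℝ)^((2*(m:ℝ)+2) - p) := by
            rw [mul_assoc, key]
end
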